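/- arXiv:1901.08210 — 6 statements merged into one kernel-verified Lean document; each statement's English description precedes it below -/
import Mathlib

section
/- For every natural number k, the 2k-th moment of the standard semicircular distribution equals the k-th Catalan number: ∫_{-2}^{2} x^{2k} · √(4 − x²)/(2π) dx = catalan(k) = (1/(k+1))·binom(2k, k). -/
open intervalIntegral Real

private lemma sc_cont (n : ℕ) : Continuous fun x : ℝ => x ^ n * Real.sqrt (4 - x ^ 2) := by
  fun_prop

private lemma sc_base : (∫ x in (-2 : ℝ)..2, x ^ (2 * 0) * Real.sqrt (4 - x ^ 2))
    = 2 * Real.pi := by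
  have h : ∀ x : ℝ, x ^ (2 * 0) * Real.sqrt (4 - x ^ 2)
      = 2 * Real.sqrt (1 - (x / 2) ^ 2) := by
    intro x
    rw [pow_zero, one_mul, show (4 : ℝ) - x ^ 2 = 2 ^ 2 * (1 - (x / 2) ^ 2) by ring,
      Real.sqrt_mul (by positivity), Real.sqrt_sq (by norm_num)]
  simp_rw [h]
  rw [intervalIntegral.integral_const_mul]
  have h2 : (∫ x in (-2 : ℝ)..2, Real.sqrt (1 - (x / 2) ^ 2))
      = (2 : ℝ) • ∫ x in (-2 / 2 : ℝ)..(2 / 2 : ℝ), Real.sqrt (1 - x ^ 2) :=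
    intervalIntegral.integral_comp_div (fun x => Real.sqrt (1 - x ^ 2)) two_ne_zero
  norm_num at h2
  rw [h2, integral_sqrt_one_sub_sq]
  ring

private lemma sc_key (k : ℕ) : (∫ x in (-2 : ℝ)..2, x ^ (2 * k) * Real.sqrt (4 - x ^ 2))
    = 2 * Real.pi * (catalan k : ℝ) := by
  induction k with
  | zero => simpa using sc_base
  | succ k ih =>
    set u : ℝ → ℝ := fun x => x ^ (2 * k + 1) with hu_def
    set u' : ℝ → ℝ := fun x => (2 * (k : ℝ) + 1) * x ^ (2 * k) with hu'_def
    set v : ℝ → ℝ := fun x => -(1 / 3) * (4 - x ^ 2) ^ ((3 : ℝ) / 2) with hv_def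
    set v' : ℝ → ℝ := fun x => x * Real.sqrt (4 - x ^ 2) with hv'_def
    have hu : ∀ x ∈ Set.uIcc (-2 : ℝ) 2, HasDerivAt u (u' x) x := by
      intro x _
      simpa using hasDerivAt_pow (2 * k + 1) x
    have hv : ∀ x ∈ Set.uIcc (-2 : ℝ) 2, HasDerivAt v (v' x) x := by
      intro x hx
      have hx4 : (0 : ℝ) ≤ 4 - x ^ 2 := by
        rw [Set.uIcc_of_le (by norm_num : (-2 : ℝ) ≤ 2)] at hx
        nlinarith [hx.1, hx.2]
      have hin : HasDerivAt (fun y : ℝ => 4 - y ^ 2) (-(2 * x)) x := by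
        simpa using ((hasDerivAt_pow 2 x).const_sub 4)
      have hout : HasDerivAt (fun t : ℝ => t ^ ((3 : ℝ) / 2))
          ((3 : ℝ) / 2 * (4 - x ^ 2) ^ ((3 : ℝ) / 2 - 1)) (4 - x ^ 2) :=
        Real.hasDerivAt_rpow_const (Or.inr (by norm_num))
      have := (hout.comp x hin).const_mul (-(1 / 3) : ℝ)
      refine this.congr_deriv ?_
      rw [show (3 : ℝ) / 2 - 1 = 1 / 2 by norm_num, ← Real.sqrt_eq_rpow]
      simp only [hv'_def]
      ring
    have hu' : IntervalIntegrable u' MeasureTheory.volume (-2 : ℝ) 2 :=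
      (by fun_prop : Continuous u').intervalIntegrable _ _
    have hv' : IntervalIntegrable v' MeasureTheory.volume (-2 : ℝ) 2 :=
      (by fun_prop : Continuous v').intervalIntegrable _ _
    have hbp := intervalIntegral.integral_mul_deriv_eq_deriv_mul hu hv hu' hv'
    -- boundary terms vanish
    have hb2 : v 2 = 0 := by
      simp only [hv_def]
      norm_num
    have hbm2 : v (-2) = 0 := by
      simp only [hv_def]
      norm_num
    -- LHS of hbp is the (k+1)-th integral
    have hL : (∫ x in (-2 : ℝ)..2, u x * v' x)
        = ∫ x in (-2 : ℝ)..2, x ^ (2 * (k + 1)) * Real.sqrt (4 - x ^ 2) := by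
      apply intervalIntegral.integral_congr
      intro x _
      simp only [hu_def, hv'_def]
      ring
    -- the remaining integral
    have hR : (∫ x in (-2 : ℝ)..2, u' x * v x)
        = -((2 * (k : ℝ) + 1) / 3) *
          ((4 : ℝ) * (∫ x in (-2 : ℝ)..2, x ^ (2 * k) * Real.sqrt (4 - x ^ 2))
            - ∫ x in (-2 : ℝ)..2, x ^ (2 * (k + 1)) * Real.sqrt (4 - x ^ 2)) := by
      have hcongr : (∫ x in (-2 : ℝ)..2, u' x * v x)
          = ∫ x in (-2 : ℝ)..2, -((2 * (k : ℝ) + 1) / 3) *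
              (4 * (x ^ (2 * k) * Real.sqrt (4 - x ^ 2))
                - x ^ (2 * (k + 1)) * Real.sqrt (4 - x ^ 2)) := by
        apply intervalIntegral.integral_congr
        intro x hx
        have hx4 : (0 : ℝ) ≤ 4 - x ^ 2 := by
          rw [Set.uIcc_of_le (by norm_num : (-2 : ℝ) ≤ 2)] at hx
          nlinarith [hx.1, hx.2]
        have hrp : (4 - x ^ 2) ^ ((3 : ℝ) / 2)
            = (4 - x ^ 2) * Real.sqrt (4 - x ^ 2) := by
          rw [show (3 : ℝ) / 2 = 1 + 1 / 2 by norm_num,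
            Real.rpow_add' hx4 (by norm_num), Real.rpow_one, ← Real.sqrt_eq_rpow]
        simp only [hu'_def, hv_def, hrp]
        ring
      rw [hcongr, intervalIntegral.integral_const_mul, intervalIntegral.integral_sub
        ((by fun_prop : Continuous fun x : ℝ => 4 * (x ^ (2 * k) * Real.sqrt (4 - x ^ 2))).intervalIntegrable _ _)
        ((sc_cont (2 * (k + 1))).intervalIntegrable _ _),
        intervalIntegral.integral_const_mul]
    rw [hL, hR, hb2, hbm2, ih] at hbp
    -- Catalan recurrence over ℝ
    have hcat : ((k : ℝ) + 2) * (catalan (k + 1) : ℝ)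
        = 2 * (2 * (k : ℝ) + 1) * (catalan k : ℝ) := by
      have h1 := succ_mul_catalan_eq_centralBinom (k + 1)
      have h2 := Nat.succ_mul_centralBinom_succ k
      have h3 := succ_mul_catalan_eq_centralBinom k
      have h4 : (k + 1) * ((k + 2) * catalan (k + 1))
          = (k + 1) * (2 * (2 * k + 1) * catalan k) := by
        calc (k + 1) * ((k + 2) * catalan (k + 1))
            = (k + 1) * ((k + 1 + 1) * catalan (k + 1)) := by ring_nf
          _ = (k + 1) * (k + 1).centralBinom := by rw [h1]
          _ = 2 * (2 * k + 1) * k.centralBinom := h2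
          _ = 2 * (2 * k + 1) * ((k + 1) * catalan k) := by rw [h3]
          _ = (k + 1) * (2 * (2 * k + 1) * catalan k) := by ring
      have h5 := Nat.eq_of_mul_eq_mul_left (Nat.succ_pos k) h4
      exact_mod_cast congrArg (fun n : ℕ => (n : ℝ)) h5
    have hk2 : ((k : ℝ) + 2) ≠ 0 := by positivity
    have hmain : ((k : ℝ) + 2) * (∫ x in (-2 : ℝ)..2, x ^ (2 * (k + 1)) * Real.sqrt (4 - x ^ 2))
        = ((k : ℝ) + 2) * (2 * Real.pi * (catalan (k + 1) : ℝ)) := by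
      push_cast at hbp
      linear_combination (3 / 2 : ℝ) * hbp - 2 * Real.pi * hcat
    exact mul_left_cancel₀ hk2 hmain

/-- The even moments of the standard semicircular distribution (density
`x ↦ √(4 − x²)/(2π)` on `[−2, 2]`) are the Catalan numbers:
`∫_{-2}^{2} x^{2k} √(4 − x²)/(2π) dx = catalan k = (1/(k+1))·C(2k, k)`. -/
theorem semicircular_even_moment (k : ℕ) :
    (∫ x in (-2 : ℝ)..2, x ^ (2 * k) * (Real.sqrt (4 - x ^ 2) / (2 * Real.pi)))
      = (catalan k : ℝ) ∧
    (catalan k : ℝ) = (1 / (k + 1 : ℝ)) * (Nat.choose (2 * k) k : ℝ) := by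
  constructor
  · have h : (∫ x in (-2 : ℝ)..2, x ^ (2 * k) * (Real.sqrt (4 - x ^ 2) / (2 * Real.pi)))
        = (∫ x in (-2 : ℝ)..2, x ^ (2 * k) * Real.sqrt (4 - x ^ 2)) / (2 * Real.pi) := by
      rw [← intervalIntegral.integral_div]
      apply intervalIntegral.integral_congr
      intro x _
      ring
    rw [h, sc_key k]
    field_simp
  · have h := succ_mul_catalan_eq_centralBinom k
    rw [Nat.centralBinom] at h
    have h' : ((k : ℝ) + 1) * (catalan k : ℝ) = (Nat.choose (2 * k) k : ℝ) := by
      exact_mod_cast congrArg (fun n : ℕ => (n : ℝ)) h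
    have hk : ((k : ℝ) + 1) ≠ 0 := by positivity
    field_simp
    linarith [h']
end

section
/- Writing m₂ = ∫_{-2}^{2} (x³ − 3x)² · √(4 − x²)/(2π) dx and m₄ = ∫_{-2}^{2} (x³ − 3x)⁴ · √(4 − x²)/(2π) dx, one has m₄ − 2·m₂² = −2; in particular m₄ − 2·m₂² < 0. -/
open Real intervalIntegral Set

lemma integral_poly_mul_sqrt (P Q Q' : ℝ → ℝ) (A : ℝ)
    (hQ : ∀ x, HasDerivAt Q (Q' x) x) (hQc : Continuous Q) (hP : Continuous P)
    (heq : ∀ x : ℝ, Q' x * (4 - x ^ 2) - Q x * x + A = P x * (4 - x ^ 2)) :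
    ∫ x in (-2 : ℝ)..2, P x * Real.sqrt (4 - x ^ 2) = A * Real.pi := by
  set F : ℝ → ℝ := fun x => Q x * Real.sqrt (4 - x ^ 2) + A * Real.arcsin (x / 2) with hF
  have key : ∫ x in (-2 : ℝ)..2, P x * Real.sqrt (4 - x ^ 2) = F 2 - F (-2) := by
    apply intervalIntegral.integral_eq_sub_of_hasDeriv_right_of_le (by norm_num)
    · apply ContinuousOn.add
      · exact (hQc.mul (Real.continuous_sqrt.comp (by continuity))).continuousOn
      · exact (continuous_const.mul (Real.continuous_arcsin.comp (by continuity))).continuousOn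
    · intro x hx
      have hx1 : (0:ℝ) < 4 - x ^ 2 := by nlinarith [hx.1, hx.2]
      set s := Real.sqrt (4 - x ^ 2) with hs
      have hspos : 0 < s := Real.sqrt_pos.mpr hx1
      have hs2 : s ^ 2 = 4 - x ^ 2 := Real.sq_sqrt hx1.le
      have hsqrt : HasDerivAt (fun y : ℝ => Real.sqrt (4 - y ^ 2)) (1 / (2 * s) * (0 - 2 * x)) x := by
        exact (Real.hasDerivAt_sqrt hx1.ne').comp x
          ((hasDerivAt_const x (4:ℝ)).sub ((hasDerivAt_pow 2 x).congr_deriv (by ring)))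
      have h14 : Real.sqrt (1 - (x / 2) ^ 2) = s / 2 := by
        rw [show (1 : ℝ) - (x / 2) ^ 2 = (4 - x ^ 2) / 4 by ring,
          Real.sqrt_div hx1.le, show Real.sqrt 4 = 2 by
            rw [show (4:ℝ) = 2 ^ 2 by norm_num, Real.sqrt_sq two_pos.le]]
      have harcsin : HasDerivAt (fun y : ℝ => Real.arcsin (y / 2))
          (1 / Real.sqrt (1 - (x / 2) ^ 2) * (1 / 2)) x := by
        have h1 : x / 2 ≠ -1 := by intro h; nlinarith [hx.1]
        have h2 : x / 2 ≠ 1 := by intro h; nlinarith [hx.2]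
        exact (Real.hasDerivAt_arcsin h1 h2).comp x ((hasDerivAt_id x).div_const 2)
      have hD : HasDerivAt F
          (Q' x * s + Q x * (1 / (2 * s) * (0 - 2 * x)) + A * (1 / Real.sqrt (1 - (x / 2) ^ 2) * (1 / 2))) x := by
        have h := ((hQ x).mul hsqrt).add ((hasDerivAt_const x A).mul harcsin)
        exact h.congr_deriv (by rw [hs]; ring)
      have : Q' x * s + Q x * (1 / (2 * s) * (0 - 2 * x)) + A * (1 / Real.sqrt (1 - (x / 2) ^ 2) * (1 / 2)) = P x * s := by
        rw [h14]
        have h := heq x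
        field_simp
        linear_combination 2 * h + (2 * Q' x - 2 * P x) * hs2
      rw [this] at hD
      exact hD.hasDerivWithinAt
    · exact (hP.mul (Real.continuous_sqrt.comp (by continuity))).intervalIntegrable _ _
  rw [key, hF]
  simp only []
  norm_num [Real.arcsin_one, Real.arcsin_neg, Real.sqrt_eq_zero]
  ring

set_option maxHeartbeats 1000000 in
/-- For `m₂`, `m₄` the second and fourth moments of `x ↦ x³ − 3x` under the standard
semicircular distribution, the fourth free cumulant `m₄ − 2·m₂²` equals `−2`;
in particular it is negative. -/
theorem fourth_free_cumulant_of_cubic_minus_linear :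
    ((∫ x in (-2 : ℝ)..2, (x ^ 3 - 3 * x) ^ 4 * (Real.sqrt (4 - x ^ 2) / (2 * Real.pi))) -
      2 * (∫ x in (-2 : ℝ)..2, (x ^ 3 - 3 * x) ^ 2 * (Real.sqrt (4 - x ^ 2) / (2 * Real.pi))) ^ 2
      = -2) ∧
    ((∫ x in (-2 : ℝ)..2, (x ^ 3 - 3 * x) ^ 4 * (Real.sqrt (4 - x ^ 2) / (2 * Real.pi))) -
      2 * (∫ x in (-2 : ℝ)..2, (x ^ 3 - 3 * x) ^ 2 * (Real.sqrt (4 - x ^ 2) / (2 * Real.pi))) ^ 2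
      < 0) := by
  have hQ2 : ∀ x : ℝ, HasDerivAt (fun x : ℝ => x ^ 7 / 8 - 13 / 12 * x ^ 5 + 17 / 6 * x ^ 3 - x)
      (7 * x ^ 6 / 8 - 65 / 12 * x ^ 4 + 17 / 2 * x ^ 2 - 1) x := by
    intro x
    have h := ((((hasDerivAt_pow 7 x).div_const 8).sub
      ((hasDerivAt_pow 5 x).const_mul (13 / 12 : ℝ))).add
      ((hasDerivAt_pow 3 x).const_mul (17 / 6 : ℝ))).sub (hasDerivAt_id x)
    exact h.congr_deriv (by push_cast; ring)
  have hQ4 : ∀ x : ℝ, HasDerivAt (fun x : ℝ => x ^ 13 / 14 - 43 / 42 * x ^ 11 + 598 / 105 * x ^ 9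
      - 1041 / 70 * x ^ 7 + 161 / 10 * x ^ 5 - x ^ 3 / 2 - 3 * x)
      (13 * x ^ 12 / 14 - 473 / 42 * x ^ 10 + 5382 / 105 * x ^ 8 - 7287 / 70 * x ^ 6
        + 161 / 2 * x ^ 4 - 3 * x ^ 2 / 2 - 3) x := by
    intro x
    have h := ((((((hasDerivAt_pow 13 x).div_const 14).sub
      ((hasDerivAt_pow 11 x).const_mul (43 / 42 : ℝ))).add
      ((hasDerivAt_pow 9 x).const_mul (598 / 105 : ℝ))).sub
      ((hasDerivAt_pow 7 x).const_mul (1041 / 70 : ℝ))).add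
      ((hasDerivAt_pow 5 x).const_mul (161 / 10 : ℝ))).sub
      ((hasDerivAt_pow 3 x).div_const 2) |>.sub ((hasDerivAt_id x).const_mul 3)
    exact h.congr_deriv (by push_cast; ring)
  have h2 : ∫ x in (-2 : ℝ)..2, (x ^ 3 - 3 * x) ^ 2 * Real.sqrt (4 - x ^ 2) = 4 * Real.pi :=
    integral_poly_mul_sqrt _ _ _ 4 hQ2 (by fun_prop) (by fun_prop) (fun x => by ring)
  have h4 : ∫ x in (-2 : ℝ)..2, (x ^ 3 - 3 * x) ^ 4 * Real.sqrt (4 - x ^ 2) = 12 * Real.pi :=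
    integral_poly_mul_sqrt _ _ _ 12 hQ4 (by fun_prop) (by fun_prop) (fun x => by ring)
  have e2 : (∫ x in (-2 : ℝ)..2, (x ^ 3 - 3 * x) ^ 2 * (Real.sqrt (4 - x ^ 2) / (2 * Real.pi)))
      = (2 : ℝ) := by
    simp_rw [mul_div_assoc']
    rw [intervalIntegral.integral_div, h2]
    field_simp
    ring
  have e4 : (∫ x in (-2 : ℝ)..2, (x ^ 3 - 3 * x) ^ 4 * (Real.sqrt (4 - x ^ 2) / (2 * Real.pi)))
      = (6 : ℝ) := by
    simp_rw [mul_div_assoc']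
    rw [intervalIntegral.integral_div, h4]
    field_simp
    ring
  rw [e2, e4]
  norm_num
end

section
/- Over R = ℂ with L = 1 and one system variable Y₁, the noncommutative polynomial Q₁ = Σ_{i=1}^{n} (X_i·(Y₁ + 1))² ∈ ℂ⟨X ⊔ {Y₁}⟩ is a proper algebraic system (its coefficients at the empty word and at the one-letter word Y₁ vanish), and the series P_semi : F(X) → ℂ defined by P_semi(F) = N(F) for F ≠ e and P_semi(e) = 0 is a proper solution: P_semi = Σ_{i=1}^{n} (X_i·(P_semi + 1))², where the right-hand side is computed by coefficientwise (finite convolution) multiplication of series. -/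
open scoped BigOperators

/-- Words over the alphabet `X = {X_1, ..., X_n}`. -/
abbrev Word (n : ℕ) := List (Fin n)

/-- Convolution (Cauchy) product of two noncommutative series, computed coefficientwise:
`(a·b)(F) = Σ_{F = G·H} a(G)·b(H)`. -/
def mulS {n : ℕ} {R : Type*} [Ring R] (a b : Word n → R) : Word n → R :=
  fun F => ∑ i ∈ Finset.range (F.length + 1), a (F.take i) * b (F.drop i)

/-- The series `1` (coefficient `1` at the empty word). -/
def oneS {n : ℕ} {R : Type*} [Ring R] : Word n → R := fun F => if F = [] then 1 else 0

/-- Product of a list of series. -/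
def prodS {n : ℕ} {R : Type*} [Ring R] : List (Word n → R) → (Word n → R)
  | [] => oneS
  | a :: l => mulS a (prodS l)

/-- The series of the generator `X_i`. -/
def genS {n : ℕ} {R : Type*} [Ring R] (i : Fin n) : Word n → R :=
  fun F => if F = [i] then 1 else 0

/-- `P` is a noncrossing pairing of the word `F`. -/
def IsNCPairing {n : ℕ} (F : Word n) (P : Finset (Fin F.length × Fin F.length)) : Prop :=
  (∀ p ∈ P, p.1 < p.2 ∧ F.get p.1 = F.get p.2) ∧
  (∀ i : Fin F.length, ∃! p : Fin F.length × Fin F.length, p ∈ P ∧ (p.1 = i ∨ p.2 = i)) ∧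
  (∀ p ∈ P, ∀ q ∈ P, ¬ (p.1 < q.1 ∧ q.1 < p.2 ∧ p.2 < q.2))

/-- `N(F)`: the number of noncrossing pairings of the word `F` (with `N(e) = 1`);
it equals the moment `τ(F(s₁,…,sₙ))` of free standard semicircular elements. -/
noncomputable def ncCount {n : ℕ} (F : Word n) : ℕ :=
  Nat.card {P : Finset (Fin F.length × Fin F.length) // IsNCPairing F P}

/-- Interpretation of a letter of `X ⊔ Y`. -/
def letterS {n : ℕ} {R : Type*} [Ring R] {σ : Type*} (p : σ → Word n → R) :
    (Fin n ⊕ σ) → (Word n → R)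
  | Sum.inl i => genS i
  | Sum.inr j => p j

/-- Coefficientwise substitution of the series `p j` for the variables `Y_j` in a
noncommutative polynomial `Q ∈ R⟨X ⊔ Y⟩`. -/
noncomputable def substS {n : ℕ} {R : Type*} [Ring R] {σ : Type*}
    (Q : MonoidAlgebra R (FreeMonoid (Fin n ⊕ σ))) (p : σ → Word n → R) : Word n → R :=
  fun F => ∑ W ∈ Q.coeff.support, Q.coeff W * prodS ((FreeMonoid.toList W).map (letterS p)) F

/-- The moment series of free standard semicircular elements:
`P_semi(F) = N(F)` for `F ≠ e` and `P_semi(e) = 0`. -/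
noncomputable def Psemi (n : ℕ) : Word n → ℂ :=
  fun F => if F = [] then 0 else (ncCount F : ℂ)

/-- The polynomial `Q₁ = Σ_{i=1}^{n} (X_i·(Y₁ + 1))² ∈ ℂ⟨X ⊔ {Y₁}⟩`. -/
noncomputable def Qsemi (n : ℕ) : MonoidAlgebra ℂ (FreeMonoid (Fin n ⊕ Fin 1)) :=
  ∑ i : Fin n,
    (MonoidAlgebra.single (FreeMonoid.of (Sum.inl i)) (1 : ℂ) *
      (MonoidAlgebra.single (FreeMonoid.of (Sum.inr (0 : Fin 1))) (1 : ℂ) + 1)) ^ 2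

namespace NCAux
open Finset

variable {n : ℕ}

lemma ncCount_eq (F : Word n) [DecidablePred (IsNCPairing F)] :
    ncCount F = (Finset.univ.filter (fun P => IsNCPairing F P)).card := by
  rw [ncCount, Nat.card_eq_fintype_card]
  convert Fintype.card_subtype _

lemma ncCount_nil : ncCount ([] : Word n) = 1 := by
  classical
  rw [ncCount_eq]
  have h : (Finset.univ.filter (fun P => IsNCPairing ([] : Word n) P)) = {∅} := by
    ext P
    simp only [mem_filter, mem_univ, true_and, mem_singleton]
    constructor
    · intro _
      apply Finset.eq_empty_of_forall_notMem
      rintro ⟨⟨i, hi⟩, -⟩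
      simp at hi
    · rintro rfl
      refine ⟨by simp, fun i => absurd i.2 (by simp), by simp⟩
  rw [h, Finset.card_singleton]

lemma cover_unique {F : Word n} {P : Finset (Fin F.length × Fin F.length)}
    (h : IsNCPairing F P) {p q : Fin F.length × Fin F.length}
    (hp : p ∈ P) (hq : q ∈ P) {i : Fin F.length}
    (hpi : p.1 = i ∨ p.2 = i) (hqi : q.1 = i ∨ q.2 = i) : p = q := by
  obtain ⟨r, -, hr⟩ := h.2.1 i
  rw [hr p ⟨hp, hpi⟩, hr q ⟨hq, hqi⟩]

/-- structural lemma: every block of a pairing containing the block `(z,b)` with `z = 0`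
is either `(z,b)` itself, or lies strictly between `z` and `b`, or strictly beyond `b`. -/
lemma struct {F : Word n} {P : Finset (Fin F.length × Fin F.length)}
    (h : IsNCPairing F P) {z b : Fin F.length} (hz : z.val = 0) (hzb : (z, b) ∈ P) :
    ∀ q ∈ P, q = (z, b) ∨ (0 < q.1.val ∧ q.2.val < b.val) ∨ (b.val < q.1.val ∧ b.val < q.2.val) := by
  intro q hq
  obtain ⟨hlt, -⟩ := h.1 q hq
  obtain ⟨hzblt, -⟩ := h.1 _ hzb
  rw [Fin.lt_def] at hlt hzblt
  by_cases h1 : q.1 = z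
  · exact Or.inl (cover_unique h hq hzb (Or.inl h1) (Or.inl rfl))
  by_cases hb1 : q.1 = b
  · exact Or.inl (cover_unique h hq hzb (Or.inl hb1) (Or.inr rfl))
  by_cases hb2 : q.2 = b
  · exact Or.inl (cover_unique h hq hzb (Or.inr hb2) (Or.inr rfl))
  have hq1pos : 0 < q.1.val := by
    rcases Nat.eq_zero_or_pos q.1.val with h0 | hpos
    · exact absurd (Fin.ext (by omega)) h1
    · exact hpos
  rcases lt_trichotomy q.2.val b.val with hlt2 | heq | hgt2
  · exact Or.inr (Or.inl ⟨hq1pos, hlt2⟩)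
  · exact absurd (Fin.ext heq) hb2
  · refine Or.inr (Or.inr ⟨?_, hgt2⟩)
    rcases lt_trichotomy q.1.val b.val with hl | he | hg
    · refine absurd ⟨?_, ?_, ?_⟩ (h.2.2 (z, b) hzb q hq)
      · show z < q.1; rw [Fin.lt_def]; omega
      · show q.1 < b; rw [Fin.lt_def]; omega
      · show b < q.2; rw [Fin.lt_def]; omega
    · exact absurd (Fin.ext he) hb1
    · exact hg

end NCAux

namespace NCAux
open Finset
open scoped Classical

variable {n : ℕ}

def E1 (a : Fin n) (T : Word n) (j : ℕ) (m : Fin (T.take j).length) : Fin (a::T).length :=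
  ⟨m.val + 1, by have h := m.2; simp only [List.length_take, List.length_cons] at h ⊢; omega⟩

def E2 (a : Fin n) (T : Word n) (j : ℕ) (m : Fin (T.drop (j+1)).length) : Fin (a::T).length :=
  ⟨m.val + j + 2, by have h := m.2; simp only [List.length_drop, List.length_cons] at h ⊢; omega⟩

@[simp] lemma E1_val (a : Fin n) (T : Word n) (j : ℕ) (m : Fin (T.take j).length) :
    (E1 a T j m).val = m.val + 1 := rfl

@[simp] lemma E2_val (a : Fin n) (T : Word n) (j : ℕ) (m : Fin (T.drop (j+1)).length) :
    (E2 a T j m).val = m.val + j + 2 := rfl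

lemma E1_mono (a : Fin n) (T : Word n) (j : ℕ) : StrictMono (E1 a T j) := by
  intro u v h; rw [Fin.lt_def] at h ⊢; simp; omega

lemma E2_mono (a : Fin n) (T : Word n) (j : ℕ) : StrictMono (E2 a T j) := by
  intro u v h; rw [Fin.lt_def] at h ⊢; simp; omega

lemma get_E1 (a : Fin n) (T : Word n) (j : ℕ) (m : Fin (T.take j).length) :
    (a::T).get (E1 a T j m) = (T.take j).get m := by
  have h2 : m.val < T.length := by have := m.2; simp [List.length_take] at this; omega
  show T.get ⟨m.val, h2⟩ = _
  simp [List.get_eq_getElem, List.getElem_take]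

lemma get_E2 (a : Fin n) (T : Word n) (j : ℕ) (m : Fin (T.drop (j+1)).length) :
    (a::T).get (E2 a T j m) = (T.drop (j+1)).get m := by
  have h2 : m.val + j + 1 < T.length := by
    have := m.2; simp [List.length_drop] at this; omega
  have h3 : j + 1 + m.val = m.val + j + 1 := by omega
  show T.get ⟨m.val + j + 1, h2⟩ = _
  simp [List.get_eq_getElem, List.getElem_drop, h3]

/-- Pulling back a pairing along a strictly monotone, letter-preserving map whose image
is "block-closed". -/
lemma pullback_pairing {F G : Word n} (e : Fin G.length → Fin F.length)
    (hmono : StrictMono e) (hget : ∀ m, F.get (e m) = G.get m)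
    {P : Finset (Fin F.length × Fin F.length)} (hP : IsNCPairing F P)
    (hclosed : ∀ q ∈ P, ∀ i : Fin G.length, (q.1 = e i ∨ q.2 = e i) →
      ∃ u v, q = (e u, e v)) :
    IsNCPairing G (univ.filter (fun q => (e q.1, e q.2) ∈ P)) := by
  have einj := hmono.injective
  refine ⟨?_, ?_, ?_⟩
  · rintro ⟨u, v⟩ hq
    simp only [mem_filter, mem_univ, true_and] at hq
    obtain ⟨h1, h2⟩ := hP.1 _ hq
    exact ⟨hmono.lt_iff_lt.mp h1, by rw [← hget u, ← hget v]; exact h2⟩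
  · intro i
    obtain ⟨q₀, ⟨hq₀P, hq₀i⟩, huniq⟩ := hP.2.1 (e i)
    obtain ⟨u, v, rfl⟩ := hclosed q₀ hq₀P i hq₀i
    refine ⟨(u, v), ⟨by simpa using hq₀P, ?_⟩, ?_⟩
    · rcases hq₀i with h | h
      · exact Or.inl (einj h)
      · exact Or.inr (einj h)
    · rintro ⟨u', v'⟩ ⟨hr, hri⟩
      simp only [mem_filter, mem_univ, true_and] at hr
      have : (e u', e v') = (e u, e v) := by
        refine huniq _ ⟨hr, ?_⟩
        rcases hri with h | h
        · exact Or.inl (congrArg e h)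
        · exact Or.inr (congrArg e h)
      have h1 : u' = u := einj (congrArg Prod.fst this)
      have h2 : v' = v := einj (congrArg Prod.snd this)
      simp [h1, h2]
  · rintro ⟨p1, p2⟩ hp ⟨q1, q2⟩ hq ⟨c1, c2, c3⟩
    simp only [mem_filter, mem_univ, true_and] at hp hq
    exact hP.2.2 _ hp _ hq ⟨hmono c1, hmono c2, hmono c3⟩

def FWD1 (a : Fin n) (T : Word n) (j : ℕ)
    (P : Finset (Fin (a::T).length × Fin (a::T).length)) :
    Finset (Fin (T.take j).length × Fin (T.take j).length) :=
  univ.filter (fun q => (E1 a T j q.1, E1 a T j q.2) ∈ P)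

def FWD2 (a : Fin n) (T : Word n) (j : ℕ)
    (P : Finset (Fin (a::T).length × Fin (a::T).length)) :
    Finset (Fin (T.drop (j+1)).length × Fin (T.drop (j+1)).length) :=
  univ.filter (fun q => (E2 a T j q.1, E2 a T j q.2) ∈ P)

def BWD (a : Fin n) (T : Word n) (j : ℕ) (z b : Fin (a::T).length)
    (P₁ : Finset (Fin (T.take j).length × Fin (T.take j).length))
    (P₂ : Finset (Fin (T.drop (j+1)).length × Fin (T.drop (j+1)).length)) :
    Finset (Fin (a::T).length × Fin (a::T).length) :=
  insert (z, b) ((P₁.image (fun r => (E1 a T j r.1, E1 a T j r.2))) ∪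
    (P₂.image (fun r => (E2 a T j r.1, E2 a T j r.2))))

lemma mem_BWD {a : Fin n} {T : Word n} {j : ℕ} {z b : Fin (a::T).length}
    {P₁ : Finset (Fin (T.take j).length × Fin (T.take j).length)}
    {P₂ : Finset (Fin (T.drop (j+1)).length × Fin (T.drop (j+1)).length)}
    {q : Fin (a::T).length × Fin (a::T).length} :
    q ∈ BWD a T j z b P₁ P₂ ↔
      q = (z, b) ∨ (∃ r ∈ P₁, (E1 a T j r.1, E1 a T j r.2) = q) ∨
        (∃ r ∈ P₂, (E2 a T j r.1, E2 a T j r.2) = q) := by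
  simp [BWD]

end NCAux

namespace NCAux
open Finset
open scoped Classical

variable {n : ℕ}

lemma get_zero {a : Fin n} {T : Word n} (x : Fin (a::T).length) (hx : x.val = 0) :
    (a::T).get x = a := by
  have hx' : x = ⟨0, by simp⟩ := Fin.ext (by simp [hx])
  subst hx'; rfl

lemma get_succ {a : Fin n} {T : Word n} (x : Fin (a::T).length) (i : ℕ) (hi : i < T.length)
    (hx : x.val = i + 1) : (a::T).get x = T.get ⟨i, hi⟩ := by
  have hx' : x = ⟨i+1, by clear hx; simp only [List.length_cons]; omega⟩ := Fin.ext (by simp [hx])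
  rw [hx']; rfl

lemma closed1 {a : Fin n} {T : Word n} {j : ℕ} (hj : j < T.length)
    {z b : Fin (a::T).length} (hz : z.val = 0) (hb : b.val = j+1)
    {P : Finset (Fin (a::T).length × Fin (a::T).length)}
    (hP : IsNCPairing (a::T) P) (hzb : (z, b) ∈ P) :
    ∀ q ∈ P, ∀ i : Fin (T.take j).length, (q.1 = E1 a T j i ∨ q.2 = E1 a T j i) →
      ∃ u v, q = (E1 a T j u, E1 a T j v) := by
  intro q hq i hi
  have hil : i.val < j := by have := i.2; simp [List.length_take] at this; omega
  have hlt := (hP.1 q hq).1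
  rw [Fin.lt_def] at hlt
  have hq2 : q.2.val < T.length + 1 := by have := q.2.2; simpa using this
  rcases struct hP hz hzb q hq with rfl | hcase | hcase
  · exfalso
    rcases hi with h | h <;>
      · have := congrArg Fin.val h; simp only [E1_val, hz, hb] at this; omega
  · rw [hb] at hcase
    have hu : q.1.val - 1 < (T.take j).length := by simp [List.length_take]; omega
    have hv : q.2.val - 1 < (T.take j).length := by simp [List.length_take]; omega
    refine ⟨⟨q.1.val - 1, hu⟩, ⟨q.2.val - 1, hv⟩, ?_⟩
    have e1 : E1 a T j ⟨q.1.val - 1, hu⟩ = q.1 := Fin.ext (by simp; omega)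
    have e2 : E1 a T j ⟨q.2.val - 1, hv⟩ = q.2 := Fin.ext (by simp; omega)
    rw [e1, e2]
  · exfalso
    rw [hb] at hcase
    rcases hi with h | h <;>
      · have := congrArg Fin.val h; simp only [E1_val] at this; omega

lemma closed2 {a : Fin n} {T : Word n} {j : ℕ} (hj : j < T.length)
    {z b : Fin (a::T).length} (hz : z.val = 0) (hb : b.val = j+1)
    {P : Finset (Fin (a::T).length × Fin (a::T).length)}
    (hP : IsNCPairing (a::T) P) (hzb : (z, b) ∈ P) :
    ∀ q ∈ P, ∀ i : Fin (T.drop (j+1)).length, (q.1 = E2 a T j i ∨ q.2 = E2 a T j i) →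
      ∃ u v, q = (E2 a T j u, E2 a T j v) := by
  intro q hq i hi
  have hil : i.val < T.length - (j+1) := by have := i.2; simpa [List.length_drop] using this
  have hlt := (hP.1 q hq).1
  rw [Fin.lt_def] at hlt
  have hq1 : q.1.val < T.length + 1 := by have := q.1.2; simpa using this
  have hq2 : q.2.val < T.length + 1 := by have := q.2.2; simpa using this
  rcases struct hP hz hzb q hq with rfl | hcase | hcase
  · exfalso
    rcases hi with h | h <;>
      · have := congrArg Fin.val h; simp only [E2_val, hz, hb] at this; omega
  · exfalso
    rw [hb] at hcase
    rcases hi with h | h <;>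
      · have := congrArg Fin.val h; simp only [E2_val] at this; omega
  · rw [hb] at hcase
    have hu : q.1.val - j - 2 < (T.drop (j+1)).length := by simp [List.length_drop]; omega
    have hv : q.2.val - j - 2 < (T.drop (j+1)).length := by simp [List.length_drop]; omega
    refine ⟨⟨q.1.val - j - 2, hu⟩, ⟨q.2.val - j - 2, hv⟩, ?_⟩
    have e1 : E2 a T j ⟨q.1.val - j - 2, hu⟩ = q.1 := Fin.ext (by simp; omega)
    have e2 : E2 a T j ⟨q.2.val - j - 2, hv⟩ = q.2 := Fin.ext (by simp; omega)
    rw [e1, e2]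

end NCAux

namespace NCAux
open Finset
open scoped Classical

variable {n : ℕ}

lemma BWD_pairing {a : Fin n} {T : Word n} {j : ℕ} (hj : j < T.length)
    (ha : T.get ⟨j, hj⟩ = a)
    {z b : Fin (a::T).length} (hz : z.val = 0) (hb : b.val = j+1)
    {P₁ : Finset (Fin (T.take j).length × Fin (T.take j).length)}
    (hP₁ : IsNCPairing (T.take j) P₁)
    {P₂ : Finset (Fin (T.drop (j+1)).length × Fin (T.drop (j+1)).length)}
    (hP₂ : IsNCPairing (T.drop (j+1)) P₂) :
    IsNCPairing (a::T) (BWD a T j z b P₁ P₂) := by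
  have hltl : (T.take j).length = j := by simp [List.length_take]; omega
  have hldl : (T.drop (j+1)).length = T.length - (j+1) := by simp [List.length_drop]
  refine ⟨?_, ?_, ?_⟩
  · intro q hq
    rw [mem_BWD] at hq
    rcases hq with rfl | ⟨r, hr, rfl⟩ | ⟨r, hr, rfl⟩
    · constructor
      · show z < b; rw [Fin.lt_def]; omega
      · show (a::T).get z = (a::T).get b
        rw [get_zero z hz, get_succ b j hj hb, ha]
    · obtain ⟨h1, h2⟩ := hP₁.1 r hr
      constructor
      · exact E1_mono a T j h1
      · show (a::T).get (E1 a T j r.1) = (a::T).get (E1 a T j r.2)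
        rw [get_E1, get_E1]; exact h2
    · obtain ⟨h1, h2⟩ := hP₂.1 r hr
      constructor
      · exact E2_mono a T j h1
      · show (a::T).get (E2 a T j r.1) = (a::T).get (E2 a T j r.2)
        rw [get_E2, get_E2]; exact h2
  · intro i
    have hi2 : i.val < T.length + 1 := by have := i.2; simpa using this
    by_cases h0 : i.val = 0
    · refine ⟨(z, b), ⟨mem_insert_self _ _, Or.inl (show z = i from Fin.ext (by omega))⟩, ?_⟩
      rintro r ⟨hr, hri⟩
      rw [mem_BWD] at hr
      rcases hr with rfl | ⟨r', hr', rfl⟩ | ⟨r', hr', rfl⟩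
      · rfl
      · exfalso
        rcases hri with h | h <;>
          · have := congrArg Fin.val h; simp only [E1_val] at this; omega
      · exfalso
        rcases hri with h | h <;>
          · have := congrArg Fin.val h; simp only [E2_val] at this; omega
    by_cases hbv : i.val = j + 1
    · refine ⟨(z, b), ⟨mem_insert_self _ _, Or.inr (show b = i from Fin.ext (by omega))⟩, ?_⟩
      rintro r ⟨hr, hri⟩
      rw [mem_BWD] at hr
      rcases hr with rfl | ⟨r', hr', rfl⟩ | ⟨r', hr', rfl⟩
      · rfl
      · exfalso
        have hb1 : r'.1.val < j := by have := r'.1.2; omega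
        have hb2 : r'.2.val < j := by have := r'.2.2; omega
        rcases hri with h | h <;>
          · have := congrArg Fin.val h; simp only [E1_val] at this; omega
      · exfalso
        rcases hri with h | h <;>
          · have := congrArg Fin.val h; simp only [E2_val] at this; omega
    by_cases hlow : i.val < j + 1
    · have hi' : i.val - 1 < (T.take j).length := by omega
      obtain ⟨p', ⟨hp'P, hp'i⟩, huniq⟩ := hP₁.2.1 ⟨i.val - 1, hi'⟩
      have hE : E1 a T j ⟨i.val - 1, hi'⟩ = i := Fin.ext (by simp; omega)
      refine ⟨(E1 a T j p'.1, E1 a T j p'.2), ⟨?_, ?_⟩, ?_⟩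
      · rw [mem_BWD]; exact Or.inr (Or.inl ⟨p', hp'P, rfl⟩)
      · rcases hp'i with h | h
        · exact Or.inl (by show E1 a T j p'.1 = i; rw [h, hE])
        · exact Or.inr (by show E1 a T j p'.2 = i; rw [h, hE])
      · rintro r ⟨hr, hri⟩
        rw [mem_BWD] at hr
        rcases hr with rfl | ⟨r', hr', rfl⟩ | ⟨r', hr', rfl⟩
        · exfalso
          have hri' : z = i ∨ b = i := hri
          rcases hri' with h | h <;> (have := congrArg Fin.val h) <;> omega
        · have hcov : r'.1 = ⟨i.val - 1, hi'⟩ ∨ r'.2 = ⟨i.val - 1, hi'⟩ := by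
            rcases hri with h | h
            · refine Or.inl (Fin.ext ?_)
              show r'.1.val = i.val - 1
              have := congrArg Fin.val h
              simp only [E1_val] at this
              omega
            · refine Or.inr (Fin.ext ?_)
              show r'.2.val = i.val - 1
              have := congrArg Fin.val h
              simp only [E1_val] at this
              omega
          rw [huniq r' ⟨hr', hcov⟩]
        · exfalso
          rcases hri with h | h <;>
            · have := congrArg Fin.val h; simp only [E2_val] at this; omega
    · have hi' : i.val - j - 2 < (T.drop (j+1)).length := by omega
      obtain ⟨p', ⟨hp'P, hp'i⟩, huniq⟩ := hP₂.2.1 ⟨i.val - j - 2, hi'⟩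
      have hE : E2 a T j ⟨i.val - j - 2, hi'⟩ = i := Fin.ext (by simp; omega)
      refine ⟨(E2 a T j p'.1, E2 a T j p'.2), ⟨?_, ?_⟩, ?_⟩
      · rw [mem_BWD]; exact Or.inr (Or.inr ⟨p', hp'P, rfl⟩)
      · rcases hp'i with h | h
        · exact Or.inl (by show E2 a T j p'.1 = i; rw [h, hE])
        · exact Or.inr (by show E2 a T j p'.2 = i; rw [h, hE])
      · rintro r ⟨hr, hri⟩
        rw [mem_BWD] at hr
        rcases hr with rfl | ⟨r', hr', rfl⟩ | ⟨r', hr', rfl⟩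
        · exfalso
          have hri' : z = i ∨ b = i := hri
          rcases hri' with h | h <;> (have := congrArg Fin.val h) <;> omega
        · exfalso
          have hb1 : r'.1.val < j := by have := r'.1.2; omega
          have hb2 : r'.2.val < j := by have := r'.2.2; omega
          rcases hri with h | h <;>
            · have := congrArg Fin.val h; simp only [E1_val] at this; omega
        · have hcov : r'.1 = ⟨i.val - j - 2, hi'⟩ ∨ r'.2 = ⟨i.val - j - 2, hi'⟩ := by
            rcases hri with h | h
            · refine Or.inl (Fin.ext ?_)
              show r'.1.val = i.val - j - 2
              have := congrArg Fin.val h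
              simp only [E2_val] at this
              omega
            · refine Or.inr (Fin.ext ?_)
              show r'.2.val = i.val - j - 2
              have := congrArg Fin.val h
              simp only [E2_val] at this
              omega
          rw [huniq r' ⟨hr', hcov⟩]
  · intro p hp q hq
    rintro ⟨c1, c2, c3⟩
    rw [Fin.lt_def] at c1 c2 c3
    rw [mem_BWD] at hp hq
    rcases hp with rfl | ⟨r, hr, rfl⟩ | ⟨r, hr, rfl⟩ <;>
      rcases hq with rfl | ⟨s, hs, rfl⟩ | ⟨s, hs, rfl⟩
    · simp only [Prod.fst, Prod.snd, hz, hb] at c1 c2 c3; omega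
    · have hs2 : s.2.val < j := by have := s.2.2; omega
      simp only [Prod.fst, Prod.snd, hz, hb, E1_val] at c1 c2 c3; omega
    · simp only [Prod.fst, Prod.snd, hz, hb, E2_val] at c1 c2 c3; omega
    · simp only [Prod.fst, Prod.snd, hz, hb, E1_val] at c1 c2 c3; omega
    · have hr1 : r.1.val < j := by have := r.1.2; omega
      have hr2 : r.2.val < j := by have := r.2.2; omega
      have hs1 : s.1.val < j := by have := s.1.2; omega
      have hs2 : s.2.val < j := by have := s.2.2; omega
      simp only [Prod.fst, Prod.snd, E1_val] at c1 c2 c3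
      exact hP₁.2.2 r hr s hs ⟨by rw [Fin.lt_def]; omega, by rw [Fin.lt_def]; omega,
        by rw [Fin.lt_def]; omega⟩
    · have hr2 : r.2.val < j := by have := r.2.2; omega
      simp only [Prod.fst, Prod.snd, E1_val, E2_val] at c1 c2 c3; omega
    · simp only [Prod.fst, Prod.snd, hz, hb, E2_val] at c1 c2 c3; omega
    · have hs1 : s.1.val < j := by have := s.1.2; omega
      simp only [Prod.fst, Prod.snd, E1_val, E2_val] at c1 c2 c3; omega
    · simp only [Prod.fst, Prod.snd, E2_val] at c1 c2 c3
      exact hP₂.2.2 r hr s hs ⟨by rw [Fin.lt_def]; omega, by rw [Fin.lt_def]; omega,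
        by rw [Fin.lt_def]; omega⟩

end NCAux

namespace NCAux
open Finset
open scoped Classical

variable {n : ℕ}

lemma BWD_FWD {a : Fin n} {T : Word n} {j : ℕ} (hj : j < T.length)
    {z b : Fin (a::T).length} (hz : z.val = 0) (hb : b.val = j+1)
    {P : Finset (Fin (a::T).length × Fin (a::T).length)}
    (hP : IsNCPairing (a::T) P) (hzb : (z, b) ∈ P) :
    BWD a T j z b (FWD1 a T j P) (FWD2 a T j P) = P := by
  ext q
  rw [mem_BWD]
  constructor
  · rintro (rfl | ⟨r, hr, rfl⟩ | ⟨r, hr, rfl⟩)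
    · exact hzb
    · simpa [FWD1] using hr
    · simpa [FWD2] using hr
  · intro hq
    have hlt := (hP.1 q hq).1
    rw [Fin.lt_def] at hlt
    have hq1 : q.1.val < T.length + 1 := by have := q.1.2; simpa using this
    have hq2 : q.2.val < T.length + 1 := by have := q.2.2; simpa using this
    rcases struct hP hz hzb q hq with h | hcase | hcase
    · exact Or.inl h
    · obtain ⟨hc1, hc2⟩ := hcase
      rw [hb] at hc2
      have hu : q.1.val - 1 < (T.take j).length := by simp [List.length_take]; omega
      have hv : q.2.val - 1 < (T.take j).length := by simp [List.length_take]; omega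
      have e1 : E1 a T j ⟨q.1.val - 1, hu⟩ = q.1 := Fin.ext (by simp; omega)
      have e2 : E1 a T j ⟨q.2.val - 1, hv⟩ = q.2 := Fin.ext (by simp; omega)
      refine Or.inr (Or.inl ⟨(⟨q.1.val - 1, hu⟩, ⟨q.2.val - 1, hv⟩), ?_, ?_⟩)
      · simp only [FWD1, mem_filter, mem_univ, true_and]
        rw [e1, e2]
        simpa using hq
      · rw [e1, e2]
    · obtain ⟨hc1, hc2⟩ := hcase
      rw [hb] at hc1 hc2
      have hu : q.1.val - j - 2 < (T.drop (j+1)).length := by simp [List.length_drop]; omega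
      have hv : q.2.val - j - 2 < (T.drop (j+1)).length := by simp [List.length_drop]; omega
      have e1 : E2 a T j ⟨q.1.val - j - 2, hu⟩ = q.1 := Fin.ext (by simp; omega)
      have e2 : E2 a T j ⟨q.2.val - j - 2, hv⟩ = q.2 := Fin.ext (by simp; omega)
      refine Or.inr (Or.inr ⟨(⟨q.1.val - j - 2, hu⟩, ⟨q.2.val - j - 2, hv⟩), ?_, ?_⟩)
      · simp only [FWD2, mem_filter, mem_univ, true_and]
        rw [e1, e2]
        simpa using hq
      · rw [e1, e2]

lemma FWD_BWD1 {a : Fin n} {T : Word n} {j : ℕ} (hj : j < T.length)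
    {z b : Fin (a::T).length} (hz : z.val = 0) (hb : b.val = j+1)
    (P₁ : Finset (Fin (T.take j).length × Fin (T.take j).length))
    (P₂ : Finset (Fin (T.drop (j+1)).length × Fin (T.drop (j+1)).length)) :
    FWD1 a T j (BWD a T j z b P₁ P₂) = P₁ := by
  have hltl : (T.take j).length = j := by simp [List.length_take]; omega
  ext r
  simp only [FWD1, mem_filter, mem_univ, true_and]
  rw [mem_BWD]
  constructor
  · rintro (h | ⟨r', hr', h⟩ | ⟨r', hr', h⟩)
    · exfalso
      have h1 : E1 a T j r.1 = z := congrArg Prod.fst h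
      have := congrArg Fin.val h1
      simp only [E1_val] at this
      omega
    · have h1 : r'.1 = r.1 := (E1_mono a T j).injective (congrArg Prod.fst h)
      have h2 : r'.2 = r.2 := (E1_mono a T j).injective (congrArg Prod.snd h)
      have : r' = r := Prod.ext h1 h2
      rwa [this] at hr'
    · exfalso
      have h1 : E2 a T j r'.1 = E1 a T j r.1 := congrArg Prod.fst h
      have := congrArg Fin.val h1
      simp only [E1_val, E2_val] at this
      have hb1 : r.1.val < j := by have := r.1.2; omega
      omega
  · intro hr
    exact Or.inr (Or.inl ⟨r, hr, rfl⟩)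

lemma FWD_BWD2 {a : Fin n} {T : Word n} {j : ℕ} (hj : j < T.length)
    {z b : Fin (a::T).length} (hz : z.val = 0) (hb : b.val = j+1)
    (P₁ : Finset (Fin (T.take j).length × Fin (T.take j).length))
    (P₂ : Finset (Fin (T.drop (j+1)).length × Fin (T.drop (j+1)).length)) :
    FWD2 a T j (BWD a T j z b P₁ P₂) = P₂ := by
  have hltl : (T.take j).length = j := by simp [List.length_take]; omega
  ext r
  simp only [FWD2, mem_filter, mem_univ, true_and]
  rw [mem_BWD]
  constructor
  · rintro (h | ⟨r', hr', h⟩ | ⟨r', hr', h⟩)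
    · exfalso
      have h1 : E2 a T j r.1 = z := congrArg Prod.fst h
      have := congrArg Fin.val h1
      simp only [E2_val] at this
      omega
    · exfalso
      have h1 : E1 a T j r'.1 = E2 a T j r.1 := congrArg Prod.fst h
      have := congrArg Fin.val h1
      simp only [E1_val, E2_val] at this
      have hb1 : r'.1.val < j := by have := r'.1.2; omega
      omega
    · have h1 : r'.1 = r.1 := (E2_mono a T j).injective (congrArg Prod.fst h)
      have h2 : r'.2 = r.2 := (E2_mono a T j).injective (congrArg Prod.snd h)
      have : r' = r := Prod.ext h1 h2
      rwa [this] at hr'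
  · intro hr
    exact Or.inr (Or.inr ⟨r, hr, rfl⟩)

lemma card_fixed (a : Fin n) (T : Word n) (j : ℕ) (hj : j < T.length)
    (ha : T.get ⟨j, hj⟩ = a) (z b : Fin (a::T).length) (hz : z.val = 0) (hb : b.val = j+1) :
    (Finset.univ.filter (fun P : Finset (Fin (a::T).length × Fin (a::T).length) =>
        IsNCPairing (a::T) P ∧ (z, b) ∈ P)).card
      = ncCount (T.take j) * ncCount (T.drop (j+1)) := by
  rw [ncCount_eq, ncCount_eq, ← Finset.card_product]
  refine Finset.card_bij' (fun P _ => (FWD1 a T j P, FWD2 a T j P))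
    (fun Q _ => BWD a T j z b Q.1 Q.2) ?_ ?_ ?_ ?_
  · intro P hP
    simp only [mem_filter, mem_univ, true_and] at hP
    obtain ⟨hpair, hzb⟩ := hP
    rw [Finset.mem_product]
    constructor
    · simp only [mem_filter, mem_univ, true_and]
      exact pullback_pairing _ (E1_mono a T j) (get_E1 a T j) hpair (closed1 hj hz hb hpair hzb)
    · simp only [mem_filter, mem_univ, true_and]
      exact pullback_pairing _ (E2_mono a T j) (get_E2 a T j) hpair (closed2 hj hz hb hpair hzb)
  · intro Q hQ
    rw [Finset.mem_product] at hQ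
    simp only [mem_filter, mem_univ, true_and] at hQ ⊢
    exact ⟨BWD_pairing hj ha hz hb hQ.1 hQ.2, mem_insert_self _ _⟩
  · intro P hP
    simp only [mem_filter, mem_univ, true_and] at hP
    exact BWD_FWD hj hz hb hP.1 hP.2
  · intro Q hQ
    rw [Finset.mem_product] at hQ
    exact Prod.ext (FWD_BWD1 hj hz hb Q.1 Q.2) (FWD_BWD2 hj hz hb Q.1 Q.2)

end NCAux

namespace NCAux
open Finset
open scoped Classical

variable {n : ℕ}

lemma ncCount_cons (a : Fin n) (T : Word n) :
    ncCount (a :: T) = ∑ m : Fin T.length,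
      if T.get m = a then ncCount (T.take m.val) * ncCount (T.drop (m.val+1)) else 0 := by
  rw [ncCount_eq]
  have hsplit : (univ.filter (fun P => IsNCPairing (a::T) P))
      = univ.biUnion (fun m : Fin T.length =>
          univ.filter (fun P : Finset (Fin (a::T).length × Fin (a::T).length) =>
            IsNCPairing (a::T) P ∧
            ((⟨0, Nat.succ_pos _⟩ : Fin (a::T).length),
             (⟨m.val+1, Nat.succ_lt_succ m.2⟩ : Fin (a::T).length)) ∈ P)) := by
    ext P
    simp only [mem_filter, mem_univ, true_and, mem_biUnion]
    constructor
    · intro hP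
      obtain ⟨q₀, ⟨hq₀P, hq₀i⟩, -⟩ := hP.2.1 ⟨0, Nat.succ_pos _⟩
      have hlt := (hP.1 q₀ hq₀P).1
      rw [Fin.lt_def] at hlt
      have hq01 : q₀.1.val = 0 := by
        rcases hq₀i with h | h
        · exact congrArg Fin.val h
        · exfalso; have h2 : q₀.2.val = 0 := congrArg Fin.val h; omega
      have hq2b : q₀.2.val < T.length + 1 := by have := q₀.2.2; simpa using this
      have hm : q₀.2.val - 1 < T.length := by omega
      have hpair : ((⟨0, Nat.succ_pos _⟩ : Fin (a::T).length),
          (⟨(⟨q₀.2.val - 1, hm⟩ : Fin T.length).val + 1,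
            Nat.succ_lt_succ hm⟩ : Fin (a::T).length)) = q₀ := by
        refine Prod.ext (Fin.ext ?_) (Fin.ext ?_)
        · show 0 = q₀.1.val; omega
        · show q₀.2.val - 1 + 1 = q₀.2.val; omega
      exact ⟨⟨q₀.2.val - 1, hm⟩, hP, by rw [hpair]; exact hq₀P⟩
    · rintro ⟨m, hP, -⟩; exact hP
  rw [hsplit, Finset.card_biUnion]
  · apply Finset.sum_congr rfl
    intro m _
    by_cases hma : T.get m = a
    · rw [if_pos hma]
      exact card_fixed a T m.val m.2 hma _ _ rfl rfl
    · rw [if_neg hma]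
      have hempty : (univ.filter (fun P : Finset (Fin (a::T).length × Fin (a::T).length) =>
          IsNCPairing (a::T) P ∧
          ((⟨0, Nat.succ_pos _⟩ : Fin (a::T).length),
           (⟨m.val+1, Nat.succ_lt_succ m.2⟩ : Fin (a::T).length)) ∈ P)) = ∅ := by
        rw [Finset.filter_eq_empty_iff]
        rintro P - ⟨hP, hmem⟩
        obtain ⟨-, hg⟩ := hP.1 _ hmem
        apply hma
        have h1 : (a::T).get (⟨0, Nat.succ_pos _⟩ : Fin (a::T).length) = a := rfl
        have h2 : (a::T).get (⟨m.val+1, Nat.succ_lt_succ m.2⟩ : Fin (a::T).length)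
            = T.get ⟨m.val, m.2⟩ := rfl
        rw [show ((⟨0, Nat.succ_pos _⟩ : Fin (a::T).length),
            (⟨m.val+1, Nat.succ_lt_succ m.2⟩ : Fin (a::T).length)).1
            = (⟨0, Nat.succ_pos _⟩ : Fin (a::T).length) from rfl] at hg
        rw [h1] at hg
        rw [hg]
        exact h2
      rw [hempty, Finset.card_empty]
  · intro x _ y _ hxy
    rw [Function.onFun, Finset.disjoint_left]
    intro P hPx hPy
    simp only [mem_filter, mem_univ, true_and] at hPx hPy
    have heq := cover_unique hPx.1 hPx.2 hPy.2 (Or.inl rfl) (Or.inl rfl)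
    apply hxy
    have := congrArg (fun q : Fin (a::T).length × Fin (a::T).length => q.2.val) heq
    simp only at this
    exact Fin.ext (by omega)

end NCAux

namespace NCAux
open Finset

variable {n : ℕ} {R : Type*} [Ring R] {σ : Type*}

lemma mulS_oneS (a : Word n → R) : mulS a oneS = a := by
  funext F
  rw [mulS]
  rw [Finset.sum_eq_single_of_mem F.length (by simp)]
  · simp [oneS]
  · intro k hk hne
    have hk' : k < F.length := by simp at hk; omega
    have hd : F.drop k ≠ [] := by
      intro h; apply_fun List.length at h; simp at h; omega
    rw [oneS]; rw [if_neg hd, mul_zero]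

lemma oneS_mulS (a : Word n → R) : mulS oneS a = a := by
  funext F
  rw [mulS]
  rw [Finset.sum_eq_single_of_mem 0 (by simp)]
  · simp [oneS]
  · intro k hk hne
    have hk' : k ≤ F.length := by simp at hk; omega
    have ht : F.take k ≠ [] := by
      intro h; apply_fun List.length at h
      simp only [List.length_take, List.length_nil] at h; omega
    rw [oneS]; rw [if_neg ht, zero_mul]

lemma mulS_add_left (a b c : Word n → R) : mulS (a + b) c = mulS a c + mulS b c := by
  funext F; simp [mulS, add_mul, Finset.sum_add_distrib]

lemma mulS_add_right (a b c : Word n → R) : mulS a (b + c) = mulS a b + mulS a c := by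
  funext F; simp [mulS, mul_add, Finset.sum_add_distrib]

lemma substS_add (Q Q' : MonoidAlgebra R (FreeMonoid (Fin n ⊕ σ))) (p : σ → Word n → R) :
    substS (Q + Q') p = substS Q p + substS Q' p := by
  funext F
  show (Q + Q').coeff.sum (fun W c => c * prodS ((FreeMonoid.toList W).map (letterS p)) F) = _
  rw [MonoidAlgebra.coeff_add, Finsupp.sum_add_index' (fun w => by simp) (fun w c d => by rw [add_mul])]
  rfl

lemma substS_single (w : FreeMonoid (Fin n ⊕ σ)) (c : R) (p : σ → Word n → R) :
    substS (MonoidAlgebra.single w c) p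
      = fun F => c * prodS ((FreeMonoid.toList w).map (letterS p)) F := by
  funext F
  show (MonoidAlgebra.single w c).coeff.sum
      (fun W c => c * prodS ((FreeMonoid.toList W).map (letterS p)) F) = _
  rw [MonoidAlgebra.coeff_single, Finsupp.sum_single_index (by simp)]

lemma substS_sum {ι : Type*} (s : Finset ι) (Q : ι → MonoidAlgebra R (FreeMonoid (Fin n ⊕ σ)))
    (p : σ → Word n → R) :
    substS (∑ i ∈ s, Q i) p = ∑ i ∈ s, substS (Q i) p := by
  classical
  induction s using Finset.induction_on with
  | empty =>
      funext F
      simp [substS]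
  | insert _ _ hi ih =>
      rw [Finset.sum_insert hi, substS_add, ih, Finset.sum_insert hi]

lemma genS_nil (i : Fin n) (t : Word n → R) : mulS (genS i) t ([] : Word n) = 0 := by
  simp [mulS, genS]

lemma genS_cons (i : Fin n) (t : Word n → R) (f : Fin n) (G : Word n) :
    mulS (genS i) t (f :: G) = if f = i then t G else 0 := by
  rw [mulS]
  rw [Finset.sum_eq_single_of_mem 1 (by simp)]
  · by_cases hf : f = i <;> simp [genS, hf]
  · intro k hk hne
    match k with
    | 0 => simp [genS]
    | (k+1) =>
      have hk' : k + 1 < G.length + 2 := by simpa using hk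
      have ht : G.take k ≠ [] := by
        intro h; apply_fun List.length at h
        simp only [List.length_take, List.length_nil] at h; omega
      rw [List.take_succ_cons, genS]
      rw [if_neg (by intro h; injection h with h1 h2; exact ht h2), zero_mul]
end NCAux

namespace NCAux
open Finset

variable {n : ℕ}

noncomputable def NccS (n : ℕ) : Word n → ℂ := fun G => (ncCount G : ℂ)

lemma Psemi_add_oneS : (Psemi n + oneS : Word n → ℂ) = NccS n := by
  funext G
  by_cases hG : G = []
  · subst hG; simp [Psemi, oneS, NccS, Pi.add_apply, ncCount_nil]
  · simp [Psemi, oneS, NccS, Pi.add_apply, hG]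

lemma four_terms (g p : Word n → ℂ) :
    mulS g (mulS p (mulS g p)) + mulS g (mulS p g) + mulS g (mulS g p) + mulS g g
      = mulS g (mulS (p + oneS) (mulS g (p + oneS))) := by
  have h1 : mulS g (p + oneS) = mulS g p + g := by rw [mulS_add_right, mulS_oneS]
  rw [h1, mulS_add_left, oneS_mulS, mulS_add_right, mulS_add_right, mulS_add_right,
    mulS_add_right]
  abel

section Words
variable (i : Fin n)

noncomputable abbrev xw (i : Fin n) : FreeMonoid (Fin n ⊕ Fin 1) := FreeMonoid.of (Sum.inl i)
noncomputable abbrev yw (n : ℕ) : FreeMonoid (Fin n ⊕ Fin 1) := FreeMonoid.of (Sum.inr (0 : Fin 1))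

lemma Qsemi_eq : Qsemi n = ∑ i : Fin n,
    (MonoidAlgebra.single ((xw i * yw n) * (xw i * yw n)) (1 : ℂ)
      + MonoidAlgebra.single ((xw i * yw n) * xw i) 1
      + (MonoidAlgebra.single (xw i * (xw i * yw n)) 1
      + MonoidAlgebra.single (xw i * xw i) 1)) := by
  rw [Qsemi]
  apply Finset.sum_congr rfl
  intro i _
  have hA : MonoidAlgebra.single (xw i) (1:ℂ) * (MonoidAlgebra.single (yw n) 1 + 1)
      = MonoidAlgebra.single (xw i * yw n) 1 + MonoidAlgebra.single (xw i) 1 := by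
    rw [mul_add, mul_one, MonoidAlgebra.single_mul_single, mul_one]
  rw [pow_two, hA, add_mul, mul_add, mul_add, MonoidAlgebra.single_mul_single,
    MonoidAlgebra.single_mul_single, MonoidAlgebra.single_mul_single,
    MonoidAlgebra.single_mul_single, mul_one]

lemma single_eval_zero (w u : FreeMonoid (Fin n ⊕ Fin 1))
    (hne : FreeMonoid.toList w ≠ FreeMonoid.toList u) :
    (MonoidAlgebra.single w (1 : ℂ)).coeff u = 0 := by
  classical
  rw [MonoidAlgebra.coeff_single_apply, if_neg]
  intro h; exact hne (congrArg _ h)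

end Words
end NCAux

namespace NCAux
open Finset

variable {n : ℕ}

lemma sum_genS (H : Fin n → (Word n → ℂ)) (f : Fin n) (G : Word n) :
    ∑ i : Fin n, mulS (genS i) (H i) (f :: G) = H f G := by
  rw [Finset.sum_congr rfl (fun i _ => genS_cons i (H i) f G)]
  simp

lemma subst_eval : substS (Qsemi n) (fun _ : Fin 1 => Psemi n)
    = ∑ i : Fin n, mulS (genS i) (mulS (NccS n) (mulS (genS i) (NccS n))) := by
  rw [Qsemi_eq, substS_sum]
  apply Finset.sum_congr rfl
  intro i _
  rw [substS_add, substS_add, substS_add, substS_single, substS_single, substS_single,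
    substS_single]
  have l1 : ((FreeMonoid.toList ((xw i * yw n) * (xw i * yw n))).map
      (letterS (fun _ : Fin 1 => Psemi n))) = [genS i, Psemi n, genS i, Psemi n] := by
    simp [letterS]
  have l2 : ((FreeMonoid.toList ((xw i * yw n) * xw i)).map
      (letterS (fun _ : Fin 1 => Psemi n))) = [genS i, Psemi n, genS i] := by
    simp [letterS]
  have l3 : ((FreeMonoid.toList (xw i * (xw i * yw n))).map
      (letterS (fun _ : Fin 1 => Psemi n))) = [genS i, genS i, Psemi n] := by
    simp [letterS]
  have l4 : ((FreeMonoid.toList (xw i * xw i)).map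
      (letterS (fun _ : Fin 1 => Psemi n))) = [genS i, genS i] := by
    simp [letterS]
  rw [l1, l2, l3, l4]
  simp only [one_mul]
  show mulS (genS i) (mulS (Psemi n) (mulS (genS i) (mulS (Psemi n) oneS)))
      + mulS (genS i) (mulS (Psemi n) (mulS (genS i) oneS))
      + (mulS (genS i) (mulS (genS i) (mulS (Psemi n) oneS))
      + mulS (genS i) (mulS (genS i) oneS))
      = mulS (genS i) (mulS (NccS n) (mulS (genS i) (NccS n)))
  simp only [mulS_oneS]
  rw [← Psemi_add_oneS, ← four_terms]
  abel

lemma main_eq (f : Fin n) (G : Word n) :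
    (ncCount (f :: G) : ℂ) = mulS (NccS n) (mulS (genS f) (NccS n)) G := by
  classical
  rw [ncCount_cons]
  push_cast
  rw [mulS]
  have hterm : ∀ k ∈ Finset.range (G.length + 1),
      NccS n (G.take k) * (mulS (genS f) (NccS n)) (G.drop k)
        = if h : k < G.length then
            (if G.get ⟨k, h⟩ = f then NccS n (G.take k) * NccS n (G.drop (k+1)) else 0)
          else 0 := by
    intro k hk
    by_cases h : k < G.length
    · rw [dif_pos h]
      have hdrop : G.drop k = G.get ⟨k, h⟩ :: G.drop (k+1) := by rw [List.get_eq_getElem]; exact List.drop_eq_getElem_cons h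
      rw [hdrop, genS_cons]
      by_cases hgf : G.get ⟨k, h⟩ = f
      · rw [if_pos hgf, if_pos hgf]
      · rw [if_neg hgf, if_neg hgf, mul_zero]
    · rw [dif_neg h]
      have hd : G.drop k = [] := List.drop_eq_nil_of_le (by omega)
      rw [hd, genS_nil, mul_zero]
  rw [Finset.sum_congr rfl hterm, Finset.sum_range_succ, dif_neg (lt_irrefl _), add_zero,
    Finset.sum_range]
  apply Finset.sum_congr rfl
  intro m _
  rw [dif_pos m.isLt]
  simp [NccS, Fin.eta]

end NCAux


/-- `Q₁ = Σᵢ (X_i·(Y₁ + 1))²` is a proper algebraic system of size `L = 1` (its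
coefficients at the empty word and at `Y₁` vanish), and `P_semi` is a proper solution:
`P_semi = Σᵢ (X_i·(P_semi + 1))²`, computed coefficientwise. -/
theorem Psemi_proper_algebraic_system (n : ℕ) :
    ((Qsemi n).coeff (1 : FreeMonoid (Fin n ⊕ Fin 1)) = 0 ∧
      (Qsemi n).coeff (FreeMonoid.of (Sum.inr (0 : Fin 1))) = 0) ∧
    (Psemi n [] = 0 ∧
      ∀ F : Word n, Psemi n F = substS (Qsemi n) (fun _ : Fin 1 => Psemi n) F) := by
  open NCAux in
  refine ⟨⟨?_, ?_⟩, ?_, ?_⟩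
  · rw [Qsemi_eq, MonoidAlgebra.coeff_sum, Finset.sum_apply']
    apply Finset.sum_eq_zero
    intro i _
    rw [MonoidAlgebra.coeff_add, MonoidAlgebra.coeff_add, MonoidAlgebra.coeff_add]
    rw [Finsupp.add_apply, Finsupp.add_apply, Finsupp.add_apply]
    rw [single_eval_zero _ _ (by simp), single_eval_zero _ _ (by simp),
      single_eval_zero _ _ (by simp), single_eval_zero _ _ (by simp)]
    ring
  · rw [Qsemi_eq, MonoidAlgebra.coeff_sum, Finset.sum_apply']
    apply Finset.sum_eq_zero
    intro i _
    rw [MonoidAlgebra.coeff_add, MonoidAlgebra.coeff_add, MonoidAlgebra.coeff_add]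
    rw [Finsupp.add_apply, Finsupp.add_apply, Finsupp.add_apply]
    rw [single_eval_zero _ _ (by simp), single_eval_zero _ _ (by simp),
      single_eval_zero _ _ (by simp), single_eval_zero _ _ (by simp)]
    ring
  · simp [Psemi]
  · intro F
    rw [subst_eval, Finset.sum_apply]
    cases F with
    | nil =>
      rw [Finset.sum_eq_zero (fun i _ => genS_nil i _)]
      simp [Psemi]
    | cons f G =>
      rw [sum_genS]
      rw [Psemi, if_neg (by simp)]
      exact main_eq f G
end

section
/- Let R be a ring, X a finite alphabet, and a : F(X) → R a series with a(e) = 0 that is recognized by a monoid homomorphism μ : F(X) → M_N(R) of size N ≥ 2. Define the pseudo-inverse a* : F(X) → R by a*(e) = 0 and, for a nonempty word F, a*(F) = Σ_{k=1}^{|F|} Σ ∏_{j=1}^{k} a(F_j), where the inner sum ranges over all factorizations F = F₁⋯F_k into nonempty words. Then a* is recognized by some monoid homomorphism μ' : F(X) → M_N(R) of the same size N. -/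
open scoped BigOperators

/-- Pseudo-inverse `a* = Σ_{k ≥ 1} a^k` of a series with zero constant coefficient:
`a*(e) = 0` and, for `F ≠ e`, `a*(F) = Σ_{k=1}^{|F|} Σ_{F = F₁⋯F_k, F_j ≠ e} ∏_j a(F_j)`
(factorizations of `F` into nonempty words correspond to compositions of `|F|`). -/
noncomputable def starS {n : ℕ} {R : Type*} [Ring R] (a : Word n → R) : Word n → R :=
  fun F => if F = [] then 0 else
    ∑ c : Composition F.length, ((F.splitWrtComposition c).map a).prod

/-- Prepend a block of size `l+1` to a composition of `m - l`. -/
def compCons {m : ℕ} (l : Fin (m + 1)) (c : Composition (m - l)) : Composition (m + 1) where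
  blocks := (l + 1) :: c.blocks
  blocks_pos := by
    intro i hi
    rcases List.mem_cons.1 hi with h | h
    · omega
    · exact c.blocks_pos h
  blocks_sum := by
    have := c.blocks_sum
    have hl : (l : ℕ) ≤ m := Nat.lt_succ_iff.1 l.isLt
    simp only [List.sum_cons, this]
    omega

theorem compCons_bijective {m : ℕ} :
    Function.Bijective (fun p : (l : Fin (m + 1)) × Composition (m - l) => compCons p.fst p.snd) := by
  constructor
  · rintro ⟨l, c⟩ ⟨l', c'⟩ h
    have hb : ((l : ℕ) + 1) :: c.blocks = ((l' : ℕ) + 1) :: c'.blocks := by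
      simpa [compCons, Composition.ext_iff] using h
    have hl : l = l' := by
      apply Fin.ext
      have := List.head_eq_of_cons_eq hb
      omega
    subst hl
    have : c.blocks = c'.blocks := List.tail_eq_of_cons_eq hb
    simp [Composition.ext_iff, this]
  · intro c
    obtain ⟨b, t, hbt⟩ : ∃ b t, c.blocks = b :: t := by
      cases hc : c.blocks with
      | nil => exfalso; have := c.blocks_sum; rw [hc] at this; simp at this
      | cons b t => exact ⟨b, t, rfl⟩
    have hbpos : 0 < b := c.blocks_pos (by rw [hbt]; exact List.mem_cons_self)
    have hsum := c.blocks_sum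
    rw [hbt] at hsum
    simp only [List.sum_cons] at hsum
    have hble : b - 1 ≤ m := by omega
    refine ⟨⟨⟨b - 1, by omega⟩, ⟨t, ?_, ?_⟩⟩, ?_⟩
    · intro i hi; exact c.blocks_pos (by rw [hbt]; exact List.mem_cons_of_mem _ hi)
    · simp; omega
    · apply Composition.ext
      simp [compCons, hbt]
      omega

theorem sum_composition_succ {R : Type*} [AddCommMonoid R] (m : ℕ)
    (f : Composition (m + 1) → R) :
    ∑ c : Composition (m + 1), f c
      = ∑ l : Fin (m + 1), ∑ c : Composition (m - l), f (compCons l c) := by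
  rw [← Fintype.sum_bijective _ compCons_bijective (fun p => f (compCons p.fst p.snd)) f
    (fun _ => rfl)]
  rw [← Finset.univ_sigma_univ, Finset.sum_sigma]

/-- The sum over all factorizations, with the convention `T (e) = 1`. -/
noncomputable def Tser {n : ℕ} {R : Type*} [Ring R] (a : Word n → R) (L : Word n) : R :=
  ∑ c : Composition L.length, ((L.splitWrtComposition c).map a).prod

theorem Tser_congr {n : ℕ} {R : Type*} [Ring R] (a : Word n → R) (L : Word n) {m : ℕ}
    (h : L.length = m) :
    ∑ c : Composition m, ((L.splitWrtComposition c).map a).prod = Tser a L := by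
  subst h; rfl

instance : Unique (Composition 0) where
  default := ⟨[], by simp, by simp⟩
  uniq c := by
    apply Composition.ext
    have hs := c.blocks_sum
    cases hc : c.blocks with
    | nil => rfl
    | cons b t =>
      exfalso
      have hb : 0 < b := c.blocks_pos (by rw [hc]; exact List.mem_cons_self)
      rw [hc] at hs
      simp only [List.sum_cons] at hs
      omega

theorem Tser_nil {n : ℕ} {R : Type*} [Ring R] (a : Word n → R) : Tser a [] = 1 := by
  have h : Tser a [] = ∑ c : Composition 0, ((([] : Word n).splitWrtComposition c).map a).prod := rfl
  rw [h, Fintype.sum_unique]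
  simp [List.splitWrtComposition, List.splitWrtCompositionAux]
  rfl
theorem starS_eq_Tser {n : ℕ} {R : Type*} [Ring R] (a : Word n → R) (L : Word n) (h : L ≠ []) :
    starS a L = Tser a L := by
  rw [starS, if_neg h, Tser]

theorem Tser_cons {n : ℕ} {R : Type*} [Ring R] (a : Word n → R) (x : Fin n) (F : Word n) :
    Tser a (x :: F) = ∑ l ∈ Finset.range (F.length + 1),
      a ((x :: F).take (l + 1)) * Tser a (F.drop l) := by
  have h1 : Tser a (x :: F)
      = ∑ c : Composition (F.length + 1), (((x :: F).splitWrtComposition c).map a).prod := rfl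
  rw [h1, sum_composition_succ]
  rw [← Fin.sum_univ_eq_sum_range]
  refine Finset.sum_congr rfl fun l _ => ?_
  have hsplit : ∀ c : Composition (F.length - (l : ℕ)),
      (x :: F).splitWrtComposition (compCons l c)
        = (x :: F).take ((l : ℕ) + 1) :: (F.drop (l : ℕ)).splitWrtComposition c := by
    intro c
    rw [List.splitWrtComposition, List.splitWrtComposition]
    show List.splitWrtCompositionAux (x :: F) (((l : ℕ) + 1) :: c.blocks) = _
    rw [List.splitWrtCompositionAux_cons]
    rfl
  calc ∑ c : Composition (F.length - (l : ℕ)),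
        (((x :: F).splitWrtComposition (compCons l c)).map a).prod
      = ∑ c : Composition (F.length - (l : ℕ)),
        a ((x :: F).take ((l : ℕ) + 1)) * (((F.drop (l : ℕ)).splitWrtComposition c).map a).prod := by
        refine Finset.sum_congr rfl fun c _ => ?_
        rw [hsplit c]
        simp [mul_comm]
    _ = a ((x :: F).take ((l : ℕ) + 1)) * Tser a (F.drop (l : ℕ)) := by
        rw [← Tser_congr a (F.drop (l : ℕ)) List.length_drop, ← Finset.mul_sum]

/-- If a series `a` with `a(e) = 0` is recognized by a monoid homomorphism
`μ : F(X) → M_N(R)` of size `N ≥ 2` (i.e. `a(F) = μ(F)_{1,N}`), then its pseudo-inverse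
`a*` is recognized by some monoid homomorphism of the same size `N`. -/
theorem starS_recognized {R : Type*} [Ring R] {n N : ℕ} (hN : 2 ≤ N)
    (a : Word n → R) (ha : a [] = 0)
    (μ : FreeMonoid (Fin n) →* Matrix (Fin N) (Fin N) R)
    (hrec : ∀ F : Word n, a F = μ (FreeMonoid.ofList F) ⟨0, by omega⟩ ⟨N - 1, by omega⟩) :
    ∃ μ' : FreeMonoid (Fin n) →* Matrix (Fin N) (Fin N) R,
      ∀ F : Word n, starS a F = μ' (FreeMonoid.ofList F) ⟨0, by omega⟩ ⟨N - 1, by omega⟩ := by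
  set i0 : Fin N := ⟨0, by omega⟩ with hi0
  set iN : Fin N := ⟨N - 1, by omega⟩ with hiN
  have hne : i0 ≠ iN := by
    simp only [hi0, hiN, Fin.mk.injEq, ne_eq]
    omega
  set E : Matrix (Fin N) (Fin N) R := Matrix.single iN i0 1 with hE
  set ν : FreeMonoid (Fin n) →* Matrix (Fin N) (Fin N) R :=
    FreeMonoid.lift (fun x => μ (FreeMonoid.of x) * (1 + E)) with hν
  refine ⟨ν, ?_⟩
  -- entry extraction for `A * E * B`
  have hent : ∀ A B : Matrix (Fin N) (Fin N) R, (A * E * B) i0 iN = A i0 iN * B i0 iN := by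
    intro A B
    rw [Matrix.mul_assoc, Matrix.mul_apply]
    rw [Finset.sum_eq_single iN]
    · rw [hE, Matrix.single_mul_apply_same, one_mul]
    · intro k _ hk
      rw [hE, Matrix.single_mul_apply_of_ne _ _ _ _ _ hk, mul_zero]
    · intro h; exact absurd (Finset.mem_univ iN) h
  -- the key matrix identity
  have hI : ∀ F : Word n, ν (FreeMonoid.ofList F)
      = μ (FreeMonoid.ofList F) + ∑ l ∈ Finset.range F.length,
          μ (FreeMonoid.ofList (F.take (l + 1))) * E * ν (FreeMonoid.ofList (F.drop (l + 1))) := by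
    intro F
    induction F with
    | nil => simp
    | cons x F ih =>
      rw [FreeMonoid.ofList_cons, map_mul]
      have hx : ν (FreeMonoid.of x) = μ (FreeMonoid.of x) * (1 + E) := by
        rw [hν, FreeMonoid.lift_eval_of]
      rw [hx]
      have hlen : (x :: F).length = F.length + 1 := rfl
      rw [hlen, Finset.sum_range_succ']
      have h0 : ((x :: F).take (0 + 1)) = [x] := rfl
      have hd0 : ((x :: F).drop (0 + 1)) = F := rfl
      rw [h0, hd0]
      have hterm : ∀ l, μ (FreeMonoid.ofList ((x :: F).take (l + 1 + 1))) =
          μ (FreeMonoid.of x) * μ (FreeMonoid.ofList (F.take (l + 1))) := by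
        intro l
        rw [← map_mul, ← FreeMonoid.ofList_cons]
        rfl
      have hdrop : ∀ l, ((x :: F).drop (l + 1 + 1)) = F.drop (l + 1) := by
        intro l; rfl
      have hre : ∀ l ∈ Finset.range F.length,
          μ (FreeMonoid.ofList ((x :: F).take (l + 1 + 1))) * E
            * ν (FreeMonoid.ofList ((x :: F).drop (l + 1 + 1)))
          = μ (FreeMonoid.of x) * (μ (FreeMonoid.ofList (F.take (l + 1))) * E
            * ν (FreeMonoid.ofList (F.drop (l + 1)))) := by
        intro l _
        rw [hterm l, hdrop l]
        simp only [mul_assoc]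
      rw [Finset.sum_congr rfl hre, ← Finset.mul_sum]
      rw [show FreeMonoid.ofList [x] = FreeMonoid.of x from rfl, map_mul]
      rw [mul_add, mul_one, add_mul]
      nth_rewrite 1 [ih]
      rw [mul_add]
      abel
  -- main induction on length
  have main : ∀ m : ℕ, ∀ F : Word n, F.length ≤ m →
      starS a F = ν (FreeMonoid.ofList F) i0 iN := by
    intro m
    induction m with
    | zero =>
      intro F hF
      have : F = [] := List.eq_nil_of_length_eq_zero (Nat.le_zero.1 hF)
      subst this
      rw [starS]
      simp only [if_pos rfl]
      rw [show FreeMonoid.ofList ([] : Word n) = 1 from rfl, map_one]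
      exact (Matrix.one_apply_ne hne).symm
    | succ m ih =>
      intro F hF
      cases F with
      | nil =>
        rw [starS]
        simp only [if_pos rfl]
        rw [show FreeMonoid.ofList ([] : Word n) = 1 from rfl, map_one]
        exact (Matrix.one_apply_ne hne).symm
      | cons x F' =>
        rw [starS_eq_Tser a _ (List.cons_ne_nil _ _), Tser_cons]
        rw [hI (x :: F')]
        rw [Matrix.add_apply, Matrix.sum_apply]
        have hlen : (x :: F').length = F'.length + 1 := rfl
        rw [hlen]
        -- rewrite each matrix term
        have hterm : ∀ l ∈ Finset.range (F'.length + 1),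
            (μ (FreeMonoid.ofList ((x :: F').take (l + 1))) * E
              * ν (FreeMonoid.ofList ((x :: F').drop (l + 1)))) i0 iN
            = a ((x :: F').take (l + 1)) * starS a (F'.drop l) := by
          intro l hl
          rw [hent, ← hrec]
          congr 1
          have hd : (x :: F').drop (l + 1) = F'.drop l := rfl
          rw [hd]
          refine (ih (F'.drop l) ?_).symm
          have := List.length_drop (i := l) (l := F')
          have hF' : F'.length ≤ m := by
            have : (x :: F').length = F'.length + 1 := rfl
            omega
          rw [List.length_drop]
          omega
        rw [Finset.sum_congr rfl hterm, ← hrec]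
        -- now pure algebra with Tser vs starS
        rw [Finset.sum_range_succ (fun l => a ((x :: F').take (l + 1)) * Tser a (F'.drop l)),
          Finset.sum_range_succ (fun l => a ((x :: F').take (l + 1)) * starS a (F'.drop l))]
        have hdropnil : F'.drop F'.length = [] := by simp
        rw [hdropnil, Tser_nil, mul_one]
        rw [show starS a ([] : Word n) = 0 from by rw [starS]; simp]
        rw [mul_zero, add_zero]
        have htake : (x :: F').take (F'.length + 1) = x :: F' := by
          apply List.take_of_length_le
          simp
        rw [htake]
        have hsum : ∀ l ∈ Finset.range F'.length,
            a ((x :: F').take (l + 1)) * Tser a (F'.drop l)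
            = a ((x :: F').take (l + 1)) * starS a (F'.drop l) := by
          intro l hl
          rw [starS_eq_Tser]
          intro hnil
          have := List.length_drop (i := l) (l := F')
          rw [hnil] at this
          simp at this
          simp at hl
          omega
        rw [Finset.sum_congr rfl hsum]
        exact add_comm _ _
  intro F
  exact main F.length F le_rfl
end

section
/- Let R be a ring, X a finite alphabet, and let a, b : F(X) → R be series with a(e) = b(e) = 0, recognized by monoid homomorphisms of sizes N₁ ≥ 2 and N₂ ≥ 2 respectively. Then the product series a·b, defined by (a·b)(F) = Σ_{F = G·H} a(G)·b(H) (sum over all factorizations of F into two words G, H), is recognized by some monoid homomorphism of size N₁ + N₂. -/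
open scoped BigOperators

set_option maxHeartbeats 1000000

private lemma corner_entry {R : Type*} [Ring R] {N₁ N₂ : ℕ}
    (A : Matrix (Fin N₁) (Fin N₁) R) (B : Matrix (Fin N₂) (Fin N₂) R)
    (L : Fin N₁) (z : Fin N₂) (i : Fin N₁) (j : Fin N₂) :
    (A * Matrix.single L z (1 : R) * B) i j = A i L * B z j := by
  rw [Matrix.mul_apply]
  have key : ∀ q : Fin N₂,
      (A * Matrix.single L z (1 : R)) i q * B q j =
        if q = z then A i L * B q j else 0 := by
    intro q
    rw [Matrix.mul_apply]
    by_cases hq : q = z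
    · subst hq
      simp [Matrix.single, Finset.sum_ite_eq, mul_ite]
    · have hq' : z ≠ q := fun h => hq h.symm
      simp [Matrix.single, hq, hq', mul_ite]
  simp_rw [key]
  simp

/-- If series `a, b` with `a(e) = b(e) = 0` are recognized by monoid homomorphisms
`F(X) → M_{N₁}(R)` and `F(X) → M_{N₂}(R)` of sizes `N₁, N₂ ≥ 2`, then the product series
`a·b`, `(a·b)(F) = Σ_{F = G·H} a(G)·b(H)`, is recognized by some monoid homomorphism of
size `N₁ + N₂`. -/
theorem product_recognized {R : Type*} [Ring R] {n N₁ N₂ : ℕ}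
    (hN₁ : 2 ≤ N₁) (hN₂ : 2 ≤ N₂)
    (a b : Word n → R) (ha : a [] = 0) (hb : b [] = 0)
    (μ₁ : FreeMonoid (Fin n) →* Matrix (Fin N₁) (Fin N₁) R)
    (μ₂ : FreeMonoid (Fin n) →* Matrix (Fin N₂) (Fin N₂) R)
    (hrec₁ : ∀ F : Word n, a F = μ₁ (FreeMonoid.ofList F) ⟨0, by omega⟩ ⟨N₁ - 1, by omega⟩)
    (hrec₂ : ∀ F : Word n, b F = μ₂ (FreeMonoid.ofList F) ⟨0, by omega⟩ ⟨N₂ - 1, by omega⟩) :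
    ∃ μ : FreeMonoid (Fin n) →* Matrix (Fin (N₁ + N₂)) (Fin (N₁ + N₂)) R,
      ∀ F : Word n, mulS a b F =
        μ (FreeMonoid.ofList F) ⟨0, by omega⟩ ⟨N₁ + N₂ - 1, by omega⟩ := by
  classical
  set L : Fin N₁ := ⟨N₁ - 1, by omega⟩ with hL
  set z : Fin N₂ := ⟨0, by omega⟩ with hz
  set E : Matrix (Fin N₁) (Fin N₂) R := Matrix.single L z 1 with hE
  set g : Fin n → Matrix (Fin N₁ ⊕ Fin N₂) (Fin N₁ ⊕ Fin N₂) R :=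
    fun x => Matrix.fromBlocks (μ₁ (FreeMonoid.of x)) (μ₁ (FreeMonoid.of x) * E) 0
      (μ₂ (FreeMonoid.of x)) with hg
  set ν : FreeMonoid (Fin n) →* Matrix (Fin N₁ ⊕ Fin N₂) (Fin N₁ ⊕ Fin N₂) R :=
    FreeMonoid.lift g with hν
  have key : ∀ F : Word n, ν (FreeMonoid.ofList F) =
      Matrix.fromBlocks (μ₁ (FreeMonoid.ofList F))
        (∑ k ∈ Finset.range F.length,
          μ₁ (FreeMonoid.ofList (F.take (k + 1))) * E * μ₂ (FreeMonoid.ofList (F.drop (k + 1))))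
        0 (μ₂ (FreeMonoid.ofList F)) := by
    intro F
    induction F with
    | nil =>
        simp only [List.length_nil, Finset.range_zero, Finset.sum_empty]
        have h1 : FreeMonoid.ofList ([] : Word n) = 1 := rfl
        rw [h1, map_one, map_one, map_one, ← Matrix.fromBlocks_one]
    | cons x F ih =>
        have hTR : μ₁ (FreeMonoid.of x) *
            (∑ k ∈ Finset.range F.length,
              μ₁ (FreeMonoid.ofList (F.take (k + 1))) * E *
                μ₂ (FreeMonoid.ofList (F.drop (k + 1)))) +
            μ₁ (FreeMonoid.of x) * E * μ₂ (FreeMonoid.ofList F) =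
            ∑ k ∈ Finset.range (x :: F).length,
              μ₁ (FreeMonoid.ofList ((x :: F).take (k + 1))) * E *
                μ₂ (FreeMonoid.ofList ((x :: F).drop (k + 1))) := by
          rw [List.length_cons, Finset.sum_range_succ']
          congr 1
          · rw [Matrix.mul_sum]
            refine Finset.sum_congr rfl fun k _ => ?_
            have ht : (x :: F).take (k + 1 + 1) = x :: F.take (k + 1) := rfl
            have hd : (x :: F).drop (k + 1 + 1) = F.drop (k + 1) := rfl
            rw [ht, hd]
            have hsp : FreeMonoid.ofList (x :: F.take (k + 1)) =
                FreeMonoid.of x * FreeMonoid.ofList (F.take (k + 1)) := rfl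
            rw [hsp, map_mul]
            simp only [Matrix.mul_assoc]
        have hsplit : FreeMonoid.ofList (x :: F) =
            FreeMonoid.of x * FreeMonoid.ofList F := rfl
        rw [hsplit, map_mul, ih, map_mul, map_mul]
        have hgx : ν (FreeMonoid.of x) = g x := by simp [hν]
        rw [hgx, hg, Matrix.fromBlocks_multiply]
        simp only [Matrix.mul_zero, Matrix.zero_mul, add_zero, zero_add, hTR]
  let e : Fin N₁ ⊕ Fin N₂ ≃ Fin (N₁ + N₂) := finSumFinEquiv
  refine ⟨{ toFun := fun w => (ν w).submatrix e.symm e.symm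
            map_one' := by
              show (ν 1).submatrix e.symm e.symm = 1
              rw [map_one, Matrix.submatrix_one_equiv]
            map_mul' := fun u v => by
              show (ν (u * v)).submatrix e.symm e.symm =
                (ν u).submatrix e.symm e.symm * (ν v).submatrix e.symm e.symm
              rw [map_mul, Matrix.submatrix_mul_equiv (ν u) (ν v) _ e.symm _] }, ?_⟩
  intro F
  show mulS a b F = (ν (FreeMonoid.ofList F)).submatrix e.symm e.symm
    ⟨0, by omega⟩ ⟨N₁ + N₂ - 1, by omega⟩
  rw [Matrix.submatrix_apply]
  have he1 : e.symm ⟨0, by omega⟩ = Sum.inl (⟨0, by omega⟩ : Fin N₁) := by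
    rw [Equiv.symm_apply_eq]
    simp [e]
  have he2 : e.symm ⟨N₁ + N₂ - 1, by omega⟩ = Sum.inr (⟨N₂ - 1, by omega⟩ : Fin N₂) := by
    rw [Equiv.symm_apply_eq]
    rw [Fin.ext_iff]
    simp [e]
    omega
  rw [he1, he2, key F, Matrix.fromBlocks_apply₁₂]
  rw [Matrix.sum_apply]
  have hmul : mulS a b F = ∑ k ∈ Finset.range F.length,
      a (F.take (k + 1)) * b (F.drop (k + 1)) := by
    rw [mulS, Finset.sum_range_succ']
    simp [ha]
  rw [hmul]
  refine Finset.sum_congr rfl fun k _ => ?_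
  rw [hE, corner_entry, hrec₁, hrec₂]
end

section
/- Let a : F(X) → ℂ[z] be a series with a(e) = 0 which is good, meaning that for every natural number m the set {F ∈ F(X) : the coefficient of z^m in a(F) is nonzero} is finite. Suppose (Q₁, …, Q_L) is a proper algebraic system over ℂ[z] with a proper solution (p₁, …, p_L) such that p₁ = a, and let a^t denote the iterates (a⁰ = 0, a^{t+1}_i = Q_i(X₁, …, Xₙ, a₁^t, …, a_L^t)). Fix a positive integer M. Then: (1) the set {|F| : F ∈ F(X) and there exists 0 ≤ m ≤ M with the coefficient of z^m in a(F) nonzero} is finite; and (2) for every M' greater than or equal to every element of that set and every 0 ≤ m ≤ M, Σ_{F ∈ F(X)} [z^m] a(F) = Σ_{F ∈ F(X), |F| ≤ M'} [z^m] ⟨a₁^{M'}⟩_F, where the left-hand sum has only finitely many nonzero terms and [z^m] denotes the coefficient of z^m. -/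
open scoped BigOperators

/-- A proper algebraic system: a tuple of noncommutative polynomials in `R⟨X ⊔ Y⟩` whose
coefficients at the empty word and at each one-letter word `Y_j` vanish. -/
def IsProperSystem {n L : ℕ} {R : Type*} [Ring R]
    (Q : Fin L → MonoidAlgebra R (FreeMonoid (Fin n ⊕ Fin L))) : Prop :=
  ∀ i, (Q i).coeff (1 : FreeMonoid (Fin n ⊕ Fin L)) = 0 ∧
    ∀ j, (Q i).coeff (FreeMonoid.of (Sum.inr j)) = 0

/-- A proper solution of a proper algebraic system: series with zero constant coefficient
satisfying `p_i = Q_i(X₁,…,Xₙ,p₁,…,p_L)` coefficientwise. -/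
def IsProperSolution {n L : ℕ} {R : Type*} [Ring R]
    (Q : Fin L → MonoidAlgebra R (FreeMonoid (Fin n ⊕ Fin L)))
    (p : Fin L → Word n → R) : Prop :=
  ∀ i, p i [] = 0 ∧ ∀ F, p i F = substS (Q i) p F

lemma prodS_eq_zero_of_short {n : ℕ} {R : Type*} [Ring R] :
    ∀ (l : List (Word n → R)), (∀ q ∈ l, q [] = 0) → ∀ F : Word n,
      F.length < l.length → prodS l F = 0
  | [], _, F, hF => absurd hF (by simp)
  | q :: l, h, F, hF => by
    simp only [prodS, mulS]
    refine Finset.sum_eq_zero fun i hi => ?_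
    rcases Nat.eq_zero_or_pos i with rfl | hi0
    · simp [h q (by simp)]
    · have : (F.drop i).length < l.length := by
        simp only [Finset.mem_range] at hi
        simp only [List.length_drop]
        simp only [List.length_cons] at hF
        omega
      rw [prodS_eq_zero_of_short l (fun q hq => h q (List.mem_cons_of_mem _ hq)) _ this,
        mul_zero]

lemma letterS_nil {n : ℕ} {R : Type*} [Ring R] {σ : Type*} (q : σ → Word n → R)
    (hq : ∀ j, q j [] = 0) (x : Fin n ⊕ σ) : letterS q x [] = 0 := by
  cases x with
  | inl i => simp [letterS, genS]
  | inr j => exact hq j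

lemma prodS_congr_letters {n : ℕ} {R : Type*} [Ring R] {σ : Type*}
    (q q' : σ → Word n → R) (hq : ∀ j, q j [] = 0) (hq' : ∀ j, q' j [] = 0)
    (t : ℕ) (hagree : ∀ j (F : Word n), F.length ≤ t → q j F = q' j F) :
    ∀ (W : List (Fin n ⊕ σ)) (F : Word n), F.length < t + W.length →
      prodS (W.map (letterS q)) F = prodS (W.map (letterS q')) F
  | [], F, _ => rfl
  | x :: W, F, hF => by
    simp only [List.map_cons, prodS, mulS]
    refine Finset.sum_congr rfl fun i hi => ?_
    simp only [Finset.mem_range] at hi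
    rcases Nat.eq_zero_or_pos i with rfl | hi0
    · simp [letterS_nil q hq, letterS_nil q' hq']
    rcases le_or_gt i t with hit | hit
    · have h1 : letterS q x (F.take i) = letterS q' x (F.take i) := by
        cases x with
        | inl _ => rfl
        | inr j => exact hagree j _ (by simp only [List.length_take]; omega)
      have h2 : prodS (W.map (letterS q)) (F.drop i) =
          prodS (W.map (letterS q')) (F.drop i) := by
        refine prodS_congr_letters q q' hq hq' t hagree W _ ?_
        simp only [List.length_drop, List.length_cons] at *
        omega
      rw [h1, h2]
    · have hlen : (F.drop i).length < (W.map (letterS q)).length := by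
        simp only [List.length_drop, List.length_map, List.length_cons] at *
        omega
      have hlen' : (F.drop i).length < (W.map (letterS q')).length := by
        simpa using hlen
      rw [prodS_eq_zero_of_short _ (fun g hg => ?_) _ hlen,
        prodS_eq_zero_of_short _ (fun g hg => ?_) _ hlen', mul_zero, mul_zero]
      · obtain ⟨x', _, rfl⟩ := List.mem_map.mp hg
        exact letterS_nil q' hq' x'
      · obtain ⟨x', _, rfl⟩ := List.mem_map.mp hg
        exact letterS_nil q hq x'

lemma substS_congr {n L : ℕ} {R : Type*} [Ring R]
    (Qi : MonoidAlgebra R (FreeMonoid (Fin n ⊕ Fin L)))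
    (h1 : Qi.coeff (1 : FreeMonoid (Fin n ⊕ Fin L)) = 0)
    (h2 : ∀ j, Qi.coeff (FreeMonoid.of (Sum.inr j)) = 0)
    (q q' : Fin L → Word n → R) (hq : ∀ j, q j [] = 0) (hq' : ∀ j, q' j [] = 0)
    (t : ℕ) (hagree : ∀ j (F : Word n), F.length ≤ t → q j F = q' j F)
    (F : Word n) (hF : F.length ≤ t + 1) :
    substS Qi q F = substS Qi q' F := by
  unfold substS
  refine Finset.sum_congr rfl fun W _ => ?_
  match hW : FreeMonoid.toList W with
  | [] =>
    have : W = 1 := FreeMonoid.toList.injective (by simpa using hW)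
    rw [this, h1, zero_mul, zero_mul]
  | [Sum.inl i] => rfl
  | [Sum.inr j] =>
    have : W = FreeMonoid.of (Sum.inr j) := FreeMonoid.toList.injective (by simpa using hW)
    rw [this, h2 j, zero_mul, zero_mul]
  | x :: y :: W' =>
    rw [prodS_congr_letters q q' hq hq' t hagree _ F
      (by simp only [List.length_cons]; omega)]

/-- The paper's Step 4 theorem. Let `a : F(X) → ℂ[z]` be a good series (for each `m`,
only finitely many words have a nonzero `z^m`-coefficient) with `a(e) = 0`, which is the
first component of a proper solution of a proper algebraic system `(Q₁,…,Q_L)`, and let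
`a^t` be the iterates of the system. Fix `M ≥ 1`. Then (1) the set of lengths of words
carrying a nonzero `z^m`-coefficient for some `m ≤ M` is finite, and (2) for every `M'`
at least every element of that set, and every `m ≤ M`,
`Σ_F [z^m] a(F) = Σ_{|F| ≤ M'} [z^m] ⟨a₁^{M'}⟩_F`. -/
theorem good_series_moments_by_iteration {n L : ℕ} (hL : 0 < L)
    (a : Word n → Polynomial ℂ) (hae : a [] = 0)
    (hgood : ∀ m : ℕ, {F : Word n | (a F).coeff m ≠ 0}.Finite)
    (Q : Fin L → MonoidAlgebra (Polynomial ℂ) (FreeMonoid (Fin n ⊕ Fin L)))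
    (hQ : IsProperSystem Q)
    (p : Fin L → Word n → Polynomial ℂ) (hp : IsProperSolution Q p)
    (hp₁ : p ⟨0, hL⟩ = a)
    (A : ℕ → Fin L → Word n → Polynomial ℂ)
    (hA0 : A 0 = fun _ _ => 0)
    (hAS : ∀ t i, A (t + 1) i = substS (Q i) (A t))
    (M : ℕ) (hM : 0 < M) :
    ({l : ℕ | ∃ F : Word n, F.length = l ∧ ∃ m ≤ M, (a F).coeff m ≠ 0}).Finite ∧
    ∀ M' : ℕ,
      (∀ l ∈ {l : ℕ | ∃ F : Word n, F.length = l ∧ ∃ m ≤ M, (a F).coeff m ≠ 0}, l ≤ M') →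
      ∀ m ≤ M,
        (∑ᶠ F : Word n, (a F).coeff m) =
          ∑ᶠ F ∈ {F : Word n | F.length ≤ M'}, ((A M' ⟨0, hL⟩) F).coeff m := by
  have hlenfin : ({l : ℕ | ∃ F : Word n, F.length = l ∧ ∃ m ≤ M, (a F).coeff m ≠ 0}).Finite := by
    have h1 : {F : Word n | ∃ m ≤ M, (a F).coeff m ≠ 0}.Finite := by
      refine ((Set.finite_Iic M).biUnion (fun m _ => hgood m)).subset ?_
      rintro F ⟨m, hm, h⟩
      exact Set.mem_biUnion hm h
    refine (h1.image List.length).subset ?_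
    rintro l ⟨F, hF, hm⟩
    exact ⟨F, hm, hF⟩
  refine ⟨hlenfin, ?_⟩
  intro M' hM' m hm
  have agree : ∀ t (i : Fin L) (F : Word n), F.length ≤ t → A t i F = p i F := by
    intro t
    induction t with
    | zero =>
      intro i F hF
      have hFnil : F = [] := List.length_eq_zero_iff.mp (Nat.le_zero.mp hF)
      simp [hA0, hFnil, (hp i).1]
    | succ t ih =>
      intro i F hF
      rw [hAS t i, (hp i).2 F]
      exact substS_congr (Q i) (hQ i).1 (hQ i).2 (A t) p
        (fun j => by rw [ih j [] (Nat.zero_le t)]; exact (hp j).1)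
        (fun j => (hp j).1) t (fun j F hF => ih j F hF) F hF
  have key : ∀ F : Word n, F.length ≤ M' → (A M' ⟨0, hL⟩) F = a F := by
    intro F h
    rw [agree M' _ F h, hp₁]
  have h1 : (∑ᶠ F : Word n, (a F).coeff m) =
      ∑ᶠ F ∈ {F : Word n | F.length ≤ M'}, (a F).coeff m := by
    rw [← finsum_mem_univ]
    apply finsum_mem_inter_support_eq
    ext F
    simp only [Set.mem_inter_iff, Set.mem_univ, true_and, Function.mem_support,
      Set.mem_setOf_eq]
    exact ⟨fun h => ⟨hM' F.length ⟨F, rfl, m, hm, h⟩, h⟩, And.right⟩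
  rw [h1]
  exact finsum_mem_congr rfl fun F hF => by rw [key F hF]
end
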